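/- arXiv:2010.11871 — 7 statements merged into one kernel-verified Lean document; each statement's English description precedes it below -/
import Mathlib

section
/- Let N ≥ 1 and let Y be an N×N real matrix all of whose entries are strictly positive. Then there exist diagonal N×N matrices D₁ and D₂ with strictly positive diagonal entries such that the matrix D₁ · Y · D₂ is doubly stochastic. -/
open Real Finset

namespace SinkhornAux

variable {N : ℕ}

noncomputable def Ssum (Y : Matrix (Fin N) (Fin N) ℝ) (u v : Fin N → ℝ) : ℝ :=
  ∑ i, ∑ j, Y i j * u i * v j

noncomputable def Lsum (u : Fin N → ℝ) : ℝ := ∑ i, Real.log (u i)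

noncomputable def Gfun (Y : Matrix (Fin N) (Fin N) ℝ) (p : (Fin N → ℝ) × (Fin N → ℝ)) : ℝ :=
  Ssum Y p.1 p.2 - Lsum p.1 - Lsum p.2 + (Lsum p.1 - Lsum p.2) ^ 2

lemma Ssum_update (Y : Matrix (Fin N) (Fin N) ℝ) (u v : Fin N → ℝ) (i₀ : Fin N) (t : ℝ) :
    Ssum Y (Function.update u i₀ t) v =
      (∑ j, Y i₀ j * v j) * t + ∑ i ∈ univ.erase i₀, ∑ j, Y i j * u i * v j := by
  unfold Ssum
  rw [← Finset.add_sum_erase _ _ (Finset.mem_univ i₀)]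
  congr 1
  · rw [Finset.sum_mul]
    refine Finset.sum_congr rfl fun j _ => ?_
    rw [Function.update_self]; ring
  · refine Finset.sum_congr rfl fun i hi => Finset.sum_congr rfl fun j _ => ?_
    rw [Function.update_of_ne (Finset.ne_of_mem_erase hi)]

lemma Lsum_update (u : Fin N → ℝ) (i₀ : Fin N) (t : ℝ) :
    Lsum (Function.update u i₀ t) = Real.log t + ∑ i ∈ univ.erase i₀, Real.log (u i) := by
  unfold Lsum
  rw [← Finset.add_sum_erase _ _ (Finset.mem_univ i₀), Function.update_self]
  congr 1
  refine Finset.sum_congr rfl fun i hi => ?_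
  rw [Function.update_of_ne (Finset.ne_of_mem_erase hi)]

lemma hasDerivAt_G_coord (Y : Matrix (Fin N) (Fin N) ℝ) (u v : Fin N → ℝ) (i₀ : Fin N)
    (t₀ : ℝ) (ht₀ : t₀ ≠ 0) :
    HasDerivAt (fun t => Gfun Y (Function.update u i₀ t, v))
      ((∑ j, Y i₀ j * v j) - 1 / t₀ +
        2 * (Real.log t₀ + (∑ i ∈ univ.erase i₀, Real.log (u i)) - Lsum v) * (1 / t₀)) t₀ := by
  have hfun : (fun t => Gfun Y (Function.update u i₀ t, v)) =
      (fun t => ((∑ j, Y i₀ j * v j) * t + ∑ i ∈ univ.erase i₀, ∑ j, Y i j * u i * v j)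
        - (Real.log t + ∑ i ∈ univ.erase i₀, Real.log (u i)) - Lsum v
        + ((Real.log t + ∑ i ∈ univ.erase i₀, Real.log (u i)) - Lsum v) ^ 2) := by
    funext t
    rw [Gfun, Ssum_update, Lsum_update]
  rw [hfun]
  have hlog : HasDerivAt (fun t => Real.log t + ∑ i ∈ univ.erase i₀, Real.log (u i)) (1 / t₀) t₀ := by
    simpa [one_div] using (Real.hasDerivAt_log ht₀).add_const (∑ i ∈ univ.erase i₀, Real.log (u i))
  have hlin : HasDerivAt (fun t => (∑ j, Y i₀ j * v j) * t
      + ∑ i ∈ univ.erase i₀, ∑ j, Y i j * u i * v j) (∑ j, Y i₀ j * v j) t₀ := by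
    simpa using ((hasDerivAt_id t₀).const_mul (∑ j, Y i₀ j * v j)).add_const (∑ i ∈ univ.erase i₀, ∑ j, Y i j * u i * v j)
  have hsq : HasDerivAt (fun t => ((Real.log t + ∑ i ∈ univ.erase i₀, Real.log (u i)) - Lsum v) ^ 2)
      (2 * (Real.log t₀ + (∑ i ∈ univ.erase i₀, Real.log (u i)) - Lsum v) * (1 / t₀)) t₀ := by
    have h := ((hlog.sub_const (Lsum v)).fun_pow 2)
    refine h.congr_deriv ?_
    push_cast
    ring
  exact ((hlin.sub hlog).sub_const (Lsum v)).add hsq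

lemma row_eq (Y : Matrix (Fin N) (Fin N) ℝ) (u v : Fin N → ℝ)
    (hloc : IsLocalMin (Gfun Y) (u, v)) (hu : ∀ i, 0 < u i) (i₀ : Fin N) :
    u i₀ * ∑ j, Y i₀ j * v j = 1 - 2 * (Lsum u - Lsum v) := by
  have ht₀ : u i₀ ≠ 0 := (hu i₀).ne'
  have hupd : Continuous (fun t : ℝ => Function.update u i₀ t) :=
    (@continuous_update (Fin N) (fun _ => ℝ) _ _ i₀).comp (continuous_const.prodMk continuous_id)
  have htend : Filter.Tendsto (fun t : ℝ => ((Function.update u i₀ t, v) : (Fin N → ℝ) × (Fin N → ℝ)))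
      (nhds (u i₀)) (nhds (u, v)) := by
    have := (hupd.prodMk (continuous_const : Continuous fun _ : ℝ => v)).tendsto (u i₀)
    simpa [Function.update_eq_self] using this
  have h0 : ((fun t : ℝ => ((Function.update u i₀ t, v) : (Fin N → ℝ) × (Fin N → ℝ))) (u i₀)) = (u, v) := by
    simp [Function.update_eq_self]
  have hloc'' : IsMinFilter (Gfun Y) (nhds (u, v))
      ((fun t : ℝ => ((Function.update u i₀ t, v) : (Fin N → ℝ) × (Fin N → ℝ))) (u i₀)) := by
    rw [h0]; exact hloc
  have hmin : IsLocalMin (fun t => Gfun Y (Function.update u i₀ t, v)) (u i₀) :=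
    @IsMinFilter.comp_tendsto _ _ _ _ (Gfun Y) (nhds (u, v))
      (fun t : ℝ => ((Function.update u i₀ t, v) : (Fin N → ℝ) × (Fin N → ℝ)))
      (nhds (u i₀)) (u i₀) hloc'' htend
  have hderiv := hasDerivAt_G_coord Y u v i₀ (u i₀) ht₀
  have hz := hmin.hasDerivAt_eq_zero hderiv
  have hLu : Real.log (u i₀) + ∑ i ∈ univ.erase i₀, Real.log (u i) = Lsum u := by
    rw [Lsum, ← Finset.add_sum_erase _ _ (Finset.mem_univ i₀)]
  rw [show Real.log (u i₀) + (∑ i ∈ univ.erase i₀, Real.log (u i)) - Lsum v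
      = Lsum u - Lsum v by rw [← hLu]] at hz
  have h1 : u i₀ * (1 / u i₀) = 1 := mul_one_div_cancel ht₀
  linear_combination (u i₀) * hz + (1 - 2 * (Lsum u - Lsum v)) * h1

lemma exp_le_sum (hN : 1 ≤ N) (u : Fin N → ℝ) (hu : ∀ i, 0 < u i) :
    Real.exp (Lsum u / N) ≤ ∑ k, u k := by
  haveI : Nonempty (Fin N) := Fin.pos_iff_nonempty.mp (by omega)
  have hsum : 0 < ∑ k, u k := Finset.sum_pos (fun i _ => hu i) Finset.univ_nonempty
  have hlogs : Lsum u ≤ N * Real.log (∑ k, u k) := by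
    have h1 : ∀ i ∈ univ, Real.log (u i) ≤ Real.log (∑ k, u k) := fun i _ =>
      Real.log_le_log (hu i) (Finset.single_le_sum (fun k _ => (hu k).le) (Finset.mem_univ i))
    calc Lsum u ≤ ∑ _i : Fin N, Real.log (∑ k, u k) := Finset.sum_le_sum h1
    _ = N * Real.log (∑ k, u k) := by simp [Finset.sum_const, nsmul_eq_mul]
  have hNpos : (0:ℝ) < N := by positivity
  have : Lsum u / N ≤ Real.log (∑ k, u k) := by
    rw [div_le_iff₀ hNpos]; linarith [hlogs]
  calc Real.exp (Lsum u / N) ≤ Real.exp (Real.log (∑ k, u k)) := Real.exp_le_exp.mpr this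
  _ = ∑ k, u k := Real.exp_log hsum

lemma Ssum_nonneg (Y : Matrix (Fin N) (Fin N) ℝ) (hY : ∀ i j, 0 < Y i j)
    (u v : Fin N → ℝ) (hu : ∀ i, 0 < u i) (hv : ∀ i, 0 < v i) : 0 ≤ Ssum Y u v :=
  Finset.sum_nonneg fun i _ => Finset.sum_nonneg fun j _ => (mul_pos (mul_pos (hY i j) (hu i)) (hv j)).le

set_option maxHeartbeats 1000000 in
lemma sublevel (Y : Matrix (Fin N) (Fin N) ℝ) (hY : ∀ i j, 0 < Y i j) (hN : 1 ≤ N) (M₀ : ℝ) :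
    ∃ δ C : ℝ, 0 < δ ∧ δ < 1 ∧ 1 < C ∧
      ∀ u v : Fin N → ℝ, (∀ i, 0 < u i) → (∀ i, 0 < v i) →
        Gfun Y (u, v) ≤ M₀ → ∀ i, (δ < u i ∧ u i < C) ∧ (δ < v i ∧ v i < C) := by
  haveI : Nonempty (Fin N) := Fin.pos_iff_nonempty.mp (by omega)
  -- minimal entry of Y
  obtain ⟨⟨i₀, j₀⟩, -, hmin⟩ := Finset.exists_min_image (Finset.univ ×ˢ Finset.univ)
    (fun p : Fin N × Fin N => Y p.1 p.2) ⟨(Classical.arbitrary _, Classical.arbitrary _), by simp⟩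
  obtain ⟨ε, hεdef⟩ : ∃ x : ℝ, x = Y i₀ j₀ := ⟨_, rfl⟩
  have hε : 0 < ε := hεdef ▸ hY i₀ j₀
  have hεY : ∀ i j, ε ≤ Y i j := fun i j => hεdef ▸ hmin (i, j) (by simp)
  have hNpos : (0:ℝ) < N := by positivity
  obtain ⟨c, hcdef⟩ : ∃ x : ℝ, x = ε / (4 * (N:ℝ)^2) := ⟨_, rfl⟩
  have hc : 0 < c := by rw [hcdef]; positivity
  obtain ⟨P, hPdef⟩ : ∃ x : ℝ, x = max 1 ((|M₀| + 2) / c) := ⟨_, rfl⟩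
  have hP1 : (1:ℝ) ≤ P := hPdef ▸ le_max_left _ _
  have hPc : (|M₀| + 2) / c ≤ P := hPdef ▸ le_max_right _ _
  obtain ⟨Pm, hPmdef⟩ : ∃ x : ℝ, x = max P |M₀| := ⟨_, rfl⟩
  have hPmP : P ≤ Pm := hPmdef ▸ le_max_left _ _
  have hPmM : |M₀| ≤ Pm := hPmdef ▸ le_max_right _ _
  have hPm0 : 0 ≤ Pm := le_trans (abs_nonneg M₀) hPmM
  obtain ⟨Sbar, hSbardef⟩ : ∃ x : ℝ, x = |M₀| + Pm := ⟨_, rfl⟩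
  have hSbar0 : 0 ≤ Sbar := by rw [hSbardef]; positivity
  obtain ⟨Q, hQdef⟩ : ∃ x : ℝ, x = Real.sqrt Sbar := ⟨_, rfl⟩
  have hQ0 : 0 ≤ Q := hQdef ▸ Real.sqrt_nonneg _
  obtain ⟨R, hRdef⟩ : ∃ x : ℝ, x = (Pm + Q) / 2 := ⟨_, rfl⟩
  have hR0 : 0 ≤ R := by rw [hRdef]; positivity
  obtain ⟨C₀, hC₀def⟩ : ∃ x : ℝ, x = max (Sbar * Real.exp (R / N) / ε) 1 := ⟨_, rfl⟩
  have hC₀1 : (1:ℝ) ≤ C₀ := hC₀def ▸ le_max_right _ _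
  have hC₀S : Sbar * Real.exp (R / N) / ε ≤ C₀ := hC₀def ▸ le_max_left _ _
  have hlogC₀ : 0 ≤ Real.log C₀ := Real.log_nonneg hC₀1
  obtain ⟨δ₀, hδ₀def⟩ : ∃ x : ℝ, x = Real.exp (-R - N * Real.log C₀) := ⟨_, rfl⟩
  have hδ₀ : 0 < δ₀ := hδ₀def ▸ Real.exp_pos _
  have hδ₀1 : δ₀ ≤ 1 := by
    rw [hδ₀def, show (1:ℝ) = Real.exp 0 by rw [Real.exp_zero]]
    refine Real.exp_le_exp.mpr ?_
    have h0 : 0 ≤ (N:ℝ) * Real.log C₀ := mul_nonneg hNpos.le hlogC₀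
    linarith
  refine ⟨δ₀ / 2, C₀ + 1, by positivity, by linarith, by linarith, ?_⟩
  intro u v hu hv hG
  obtain ⟨su, hsudef⟩ : ∃ x : ℝ, x = Lsum u := ⟨_, rfl⟩
  obtain ⟨sv, hsvdef⟩ : ∃ x : ℝ, x = Lsum v := ⟨_, rfl⟩
  obtain ⟨S, hSdef⟩ : ∃ x : ℝ, x = Ssum Y u v := ⟨_, rfl⟩
  have hS0 : 0 ≤ S := hSdef ▸ Ssum_nonneg Y hY u v hu hv
  have hG' : S - su - sv + (su - sv) ^ 2 ≤ M₀ := by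
    rw [hsudef, hsvdef, hSdef]; exact hG
  have hsumu : 0 < ∑ k, u k := Finset.sum_pos (fun i _ => hu i) Finset.univ_nonempty
  have hsumv : 0 < ∑ k, v k := Finset.sum_pos (fun i _ => hv i) Finset.univ_nonempty
  have hexpu : Real.exp (su / N) ≤ ∑ k, u k := by rw [hsudef]; exact exp_le_sum hN u hu
  have hexpv : Real.exp (sv / N) ≤ ∑ k, v k := by rw [hsvdef]; exact exp_le_sum hN v hv
  have hterm : ∀ i j : Fin N, ε * (u i * v j) ≤ Y i j * u i * v j := by
    intro i j
    calc ε * (u i * v j) ≤ Y i j * (u i * v j) :=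
          mul_le_mul_of_nonneg_right (hεY i j) (mul_pos (hu i) (hv j)).le
    _ = Y i j * u i * v j := by ring
  have hSlow : ε * ((∑ k, u k) * (∑ k, v k)) ≤ S := by
    rw [hSdef, Ssum, Finset.sum_mul_sum, Finset.mul_sum]
    refine Finset.sum_le_sum fun i _ => ?_
    rw [Finset.mul_sum]
    exact Finset.sum_le_sum fun j _ => hterm i j
  have hq0 : 0 ≤ (su - sv) ^ 2 := sq_nonneg _
  have hplow : -|M₀| ≤ su + sv := by linarith [le_abs_self M₀]
  have hSexp : ε * Real.exp ((su + sv) / N) ≤ S := by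
    have h1 : Real.exp ((su + sv) / N) = Real.exp (su / N) * Real.exp (sv / N) := by
      rw [← Real.exp_add]; congr 1; field_simp
    have h2 : Real.exp (su / N) * Real.exp (sv / N) ≤ (∑ k, u k) * (∑ k, v k) :=
      mul_le_mul hexpu hexpv (Real.exp_pos _).le (by linarith)
    calc ε * Real.exp ((su + sv) / N) = ε * (Real.exp (su / N) * Real.exp (sv / N)) := by rw [h1]
    _ ≤ ε * ((∑ k, u k) * (∑ k, v k)) := mul_le_mul_of_nonneg_left h2 hε.le
    _ ≤ S := hSlow
  have hpup : su + sv ≤ P := by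
    by_contra hcon
    push_neg at hcon
    have hp1 : 1 < su + sv := lt_of_le_of_lt hP1 hcon
    have hpc : (|M₀| + 2) / c < su + sv := lt_of_le_of_lt hPc hcon
    have h2 : |M₀| + 2 < (su + sv) * c := (div_lt_iff₀ hc).mp hpc
    have ha : (su + sv) / (2 * N) ≤ Real.exp ((su + sv) / (2 * N)) := by
      linarith [Real.add_one_le_exp ((su + sv) / (2 * N)), Real.exp_pos ((su + sv) / (2 * N))]
    have hb : Real.exp ((su + sv) / N) = Real.exp ((su + sv) / (2 * N)) * Real.exp ((su + sv) / (2 * N)) := by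
      rw [← Real.exp_add]; congr 1; field_simp; ring
    have hp2N : 0 ≤ (su + sv) / (2 * N) := by positivity
    have hsq : ((su + sv) / (2 * N)) * ((su + sv) / (2 * N)) ≤ Real.exp ((su + sv) / N) := by
      rw [hb]
      exact mul_le_mul ha ha hp2N (Real.exp_pos _).le
    have hcp2 : c * ((su + sv) * (su + sv)) ≤ S := by
      have heq : c * ((su + sv) * (su + sv)) = ε * (((su + sv) / (2 * N)) * ((su + sv) / (2 * N))) := by
        rw [hcdef]; field_simp; ring
      rw [heq]
      calc ε * (((su + sv) / (2 * N)) * ((su + sv) / (2 * N))) ≤ ε * Real.exp ((su + sv) / N) :=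
            mul_le_mul_of_nonneg_left hsq hε.le
      _ ≤ S := hSexp
    have hSM : S ≤ |M₀| + (su + sv) := by linarith [le_abs_self M₀]
    linarith [mul_lt_mul_of_pos_right h2 (by linarith : (0:ℝ) < su + sv),
      mul_nonneg (abs_nonneg M₀) (by linarith : (0:ℝ) ≤ su + sv - 1)]
  have habsp : |su + sv| ≤ Pm := by
    rw [abs_le]; exact ⟨by linarith, by linarith⟩
  have hSup : S ≤ Sbar := by
    obtain ⟨h1, h2⟩ := abs_le.mp habsp
    rw [hSbardef]
    linarith [le_abs_self M₀]
  have hqsq : (su - sv) ^ 2 ≤ Sbar := by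
    obtain ⟨h1, h2⟩ := abs_le.mp habsp
    rw [hSbardef]
    linarith [le_abs_self M₀]
  have habsq : |su - sv| ≤ Q := by
    rw [hQdef, ← Real.sqrt_sq_eq_abs]
    exact Real.sqrt_le_sqrt hqsq
  have hsuR : |su| ≤ R ∧ |sv| ≤ R := by
    obtain ⟨h1, h2⟩ := abs_le.mp habsp
    obtain ⟨h3, h4⟩ := abs_le.mp habsq
    constructor <;> rw [abs_le] <;> constructor <;> rw [hRdef] <;> linarith
  have hee : Real.exp (-R / (N:ℝ)) * Real.exp (R / N) = 1 := by
    rw [← Real.exp_add, neg_div, neg_add_cancel, Real.exp_zero]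
  have hupper : ∀ w : Fin N → ℝ, (∀ i, 0 < w i) →
      (∀ i, ε * (w i * Real.exp (-R / (N:ℝ))) ≤ Sbar) → ∀ i, w i ≤ C₀ := by
    intro w hw hwS i
    have h1 : w i * ε ≤ Sbar * Real.exp (R / N) := by
      have h0 := mul_le_mul_of_nonneg_right (hwS i) (Real.exp_pos (R / N)).le
      have hx : ε * (w i * Real.exp (-R / (N:ℝ))) * Real.exp (R / N) = w i * ε := by
        linear_combination (ε * w i) * hee
      rw [hx] at h0
      exact h0
    refine le_trans ?_ hC₀S
    rw [le_div_iff₀ hε]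
    linarith
  have hvexp : Real.exp (-R / (N:ℝ)) ≤ ∑ k, v k := by
    refine le_trans ?_ hexpv
    refine Real.exp_le_exp.mpr ?_
    have h1 := (abs_le.mp hsuR.2).1
    gcongr
  have huexp : Real.exp (-R / (N:ℝ)) ≤ ∑ k, u k := by
    refine le_trans ?_ hexpu
    refine Real.exp_le_exp.mpr ?_
    have h1 := (abs_le.mp hsuR.1).1
    gcongr
  have hrow : ∀ i, ε * (u i * ∑ k, v k) ≤ S := by
    intro i
    calc ε * (u i * ∑ k, v k) = ∑ j, ε * (u i * v j) := by
          rw [Finset.mul_sum, Finset.mul_sum]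
    _ ≤ ∑ j, Y i j * u i * v j := Finset.sum_le_sum fun j _ => hterm i j
    _ ≤ S := by
          rw [hSdef, Ssum]
          exact Finset.single_le_sum (f := fun k => ∑ j, Y k j * u k * v j)
            (fun k _ => Finset.sum_nonneg fun j _ =>
              (mul_pos (mul_pos (hY k j) (hu k)) (hv j)).le) (Finset.mem_univ i)
  have hcol : ∀ j, ε * (v j * ∑ k, u k) ≤ S := by
    intro j
    calc ε * (v j * ∑ k, u k) = ∑ i, ε * (u i * v j) := by
          rw [Finset.mul_sum, Finset.mul_sum]
          exact Finset.sum_congr rfl fun i _ => by ring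
    _ ≤ ∑ i, Y i j * u i * v j := Finset.sum_le_sum fun i _ => hterm i j
    _ ≤ S := by
          rw [hSdef, Ssum, Finset.sum_comm]
          exact Finset.single_le_sum (f := fun l => ∑ i, Y i l * u i * v l)
            (fun l _ => Finset.sum_nonneg fun i _ =>
              (mul_pos (mul_pos (hY i l) (hu i)) (hv l)).le) (Finset.mem_univ j)
  have hCu : ∀ i, u i ≤ C₀ := by
    refine hupper u hu fun i => ?_
    calc ε * (u i * Real.exp (-R / (N:ℝ)))
        ≤ ε * (u i * ∑ k, v k) :=
          mul_le_mul_of_nonneg_left (mul_le_mul_of_nonneg_left hvexp (hu i).le) hε.le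
    _ ≤ S := hrow i
    _ ≤ Sbar := hSup
  have hCv : ∀ j, v j ≤ C₀ := by
    refine hupper v hv fun j => ?_
    calc ε * (v j * Real.exp (-R / (N:ℝ)))
        ≤ ε * (v j * ∑ k, u k) :=
          mul_le_mul_of_nonneg_left (mul_le_mul_of_nonneg_left huexp (hv j).le) hε.le
    _ ≤ S := hcol j
    _ ≤ Sbar := hSup
  have hlower : ∀ w : Fin N → ℝ, (∀ i, 0 < w i) → (∀ i, w i ≤ C₀) →
      |Lsum w| ≤ R → ∀ i, δ₀ ≤ w i := by
    intro w hw hwC hwR i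
    have hsplit : Real.log (w i) = Lsum w - ∑ k ∈ univ.erase i, Real.log (w k) := by
      rw [Lsum, ← Finset.add_sum_erase _ _ (Finset.mem_univ i)]
      ring
    have hb1 : ∑ k ∈ univ.erase i, Real.log (w k) ≤ (univ.erase i).card • Real.log C₀ :=
      Finset.sum_le_card_nsmul _ _ _ fun k _ => Real.log_le_log (hw k) (hwC k)
    rw [nsmul_eq_mul] at hb1
    have hcard : ((univ.erase i).card : ℝ) ≤ (N : ℝ) := by
      rw [Finset.card_erase_of_mem (Finset.mem_univ i)]
      simp only [Finset.card_univ, Fintype.card_fin]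
      exact_mod_cast Nat.sub_le N 1
    have hb2 : ∑ k ∈ univ.erase i, Real.log (w k) ≤ (N : ℝ) * Real.log C₀ := by
      linarith [mul_le_mul_of_nonneg_right hcard hlogC₀]
    have hlog : -R - (N : ℝ) * Real.log C₀ ≤ Real.log (w i) := by
      rw [hsplit]
      have := abs_le.mp hwR
      linarith
    calc δ₀ = Real.exp (-R - (N : ℝ) * Real.log C₀) := hδ₀def
    _ ≤ Real.exp (Real.log (w i)) := Real.exp_le_exp.mpr hlog
    _ = w i := Real.exp_log (hw i)
  have hDu : ∀ i, δ₀ ≤ u i := hlower u hu hCu (by rw [← hsudef]; exact hsuR.1)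
  have hDv : ∀ i, δ₀ ≤ v i := hlower v hv hCv (by rw [← hsvdef]; exact hsuR.2)
  intro i
  exact ⟨⟨by linarith [hDu i], by linarith [hCu i]⟩,
    ⟨by linarith [hDv i], by linarith [hCv i]⟩⟩

lemma Gfun_swap (Y : Matrix (Fin N) (Fin N) ℝ) (q : (Fin N → ℝ) × (Fin N → ℝ)) :
    Gfun Y.transpose q = Gfun Y (q.2, q.1) := by
  have hs : Ssum Y.transpose q.1 q.2 = Ssum Y q.2 q.1 := by
    rw [Ssum, Ssum, Finset.sum_comm]
    exact Finset.sum_congr rfl fun i _ => Finset.sum_congr rfl fun j _ => by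
      rw [Matrix.transpose_apply]; ring
  rw [Gfun, Gfun, hs]
  ring

lemma col_eq (Y : Matrix (Fin N) (Fin N) ℝ) (u v : Fin N → ℝ)
    (hloc : IsLocalMin (Gfun Y) (u, v)) (hv : ∀ i, 0 < v i) (j : Fin N) :
    v j * ∑ i, Y i j * u i = 1 - 2 * (Lsum v - Lsum u) := by
  have hswKey : IsLocalMin (Gfun Y ∘ Prod.swap) ((v, u) : (Fin N → ℝ) × (Fin N → ℝ)) :=
    IsMinFilter.comp_tendsto hloc (continuous_swap.tendsto ((v, u) : (Fin N → ℝ) × (Fin N → ℝ)))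
  have hfun : (Gfun Y ∘ Prod.swap : (Fin N → ℝ) × (Fin N → ℝ) → ℝ) = Gfun Y.transpose := by
    funext q
    rw [Function.comp_apply, Gfun_swap]
    rfl
  rw [hfun] at hswKey
  have := row_eq Y.transpose v u hswKey hv j
  simpa [Matrix.transpose_apply] using this

end SinkhornAux

/-- An `N × N` real matrix is doubly stochastic if all its entries are non-negative
and every row sum and every column sum equals 1. -/
def IsDoublyStochastic {N : ℕ} (B : Matrix (Fin N) (Fin N) ℝ) : Prop :=
  (∀ i j, 0 ≤ B i j) ∧ (∀ i, ∑ j, B i j = 1) ∧ (∀ j, ∑ i, B i j = 1)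

open SinkhornAux in
/-- Existence part of Sinkhorn's theorem: every entrywise strictly positive square
matrix can be scaled by positive diagonal matrices to a doubly stochastic matrix. -/
theorem sinkhorn_exists (N : ℕ) (hN : 1 ≤ N) (Y : Matrix (Fin N) (Fin N) ℝ)
    (hY : ∀ i j, 0 < Y i j) :
    ∃ d₁ d₂ : Fin N → ℝ, (∀ i, 0 < d₁ i) ∧ (∀ i, 0 < d₂ i) ∧
      IsDoublyStochastic (Matrix.diagonal d₁ * Y * Matrix.diagonal d₂) := by
  classical
  obtain ⟨δ, C, hδ0, hδ1, hC1, hsub⟩ :=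
    sublevel Y hY hN (Gfun Y (fun _ => 1, fun _ => 1))
  set onep : (Fin N → ℝ) × (Fin N → ℝ) := (fun _ => 1, fun _ => 1) with honep
  set K : Set ((Fin N → ℝ) × (Fin N → ℝ)) :=
    Set.Icc ((fun _ => δ, fun _ => δ)) ((fun _ => C, fun _ => C)) with hKdef
  have hKc : IsCompact K := isCompact_Icc
  have honeK : onep ∈ K := by
    rw [hKdef, Set.mem_Icc]
    exact ⟨⟨fun i => hδ1.le, fun i => hδ1.le⟩, ⟨fun i => hC1.le, fun i => hC1.le⟩⟩
  -- continuity of G on K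
  have hScont : Continuous (fun p : (Fin N → ℝ) × (Fin N → ℝ) => Ssum Y p.1 p.2) := by
    unfold Ssum
    exact continuous_finset_sum _ fun i _ => continuous_finset_sum _ fun j _ =>
      (continuous_const.mul ((continuous_apply i).comp continuous_fst)).mul
        ((continuous_apply j).comp continuous_snd)
  have hKpos : ∀ p ∈ K, (∀ i, 0 < p.1 i) ∧ (∀ i, 0 < p.2 i) := by
    intro p hp
    rw [hKdef, Set.mem_Icc] at hp
    exact ⟨fun i => lt_of_lt_of_le hδ0 (hp.1.1 i), fun i => lt_of_lt_of_le hδ0 (hp.1.2 i)⟩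
  have hcont : ContinuousOn (Gfun Y) K := by
    intro p hp
    obtain ⟨hp1, hp2⟩ := hKpos p hp
    have hL1 : ContinuousAt (fun q : (Fin N → ℝ) × (Fin N → ℝ) => Lsum q.1) p := by
      refine tendsto_finset_sum _ fun i _ => ?_
      have hc : Continuous (fun q : (Fin N → ℝ) × (Fin N → ℝ) => q.1 i) :=
        (continuous_apply i).comp continuous_fst
      exact Filter.Tendsto.comp (Real.continuousAt_log (hp1 i).ne') (hc.tendsto p)
    have hL2 : ContinuousAt (fun q : (Fin N → ℝ) × (Fin N → ℝ) => Lsum q.2) p := by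
      refine tendsto_finset_sum _ fun i _ => ?_
      have hc : Continuous (fun q : (Fin N → ℝ) × (Fin N → ℝ) => q.2 i) :=
        (continuous_apply i).comp continuous_snd
      exact Filter.Tendsto.comp (Real.continuousAt_log (hp2 i).ne') (hc.tendsto p)
    have : ContinuousAt (Gfun Y) p := by
      have := ((hScont.continuousAt.sub hL1).sub hL2).add ((hL1.sub hL2).pow 2)
      exact this
    exact this.continuousWithinAt
  obtain ⟨p, hpK, hpmin⟩ := hKc.exists_isMinOn ⟨onep, honeK⟩ hcont
  have hple : Gfun Y p ≤ Gfun Y onep := isMinOn_iff.mp hpmin onep honeK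
  obtain ⟨hp1, hp2⟩ := hKpos p hpK
  have hstrict := hsub p.1 p.2 hp1 hp2 (by rw [Prod.mk.eta]; exact hple)
  -- p is a local minimum
  set U : Set ((Fin N → ℝ) × (Fin N → ℝ)) :=
    (Set.pi Set.univ fun _ : Fin N => Set.Ioo δ C) ×ˢ
      (Set.pi Set.univ fun _ : Fin N => Set.Ioo δ C) with hUdef
  have hUopen : IsOpen U :=
    (isOpen_set_pi Set.finite_univ fun _ _ => isOpen_Ioo).prod
      (isOpen_set_pi Set.finite_univ fun _ _ => isOpen_Ioo)
  have hpU : p ∈ U := by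
    rw [hUdef]
    constructor <;> intro i _
    · exact ⟨(hstrict i).1.1, (hstrict i).1.2⟩
    · exact ⟨(hstrict i).2.1, (hstrict i).2.2⟩
  have hUK : U ⊆ K := by
    intro q hq
    rw [hUdef] at hq
    rw [hKdef, Set.mem_Icc]
    exact ⟨⟨fun i => (hq.1 i (Set.mem_univ i)).1.le, fun i => (hq.2 i (Set.mem_univ i)).1.le⟩,
      ⟨fun i => (hq.1 i (Set.mem_univ i)).2.le, fun i => (hq.2 i (Set.mem_univ i)).2.le⟩⟩
  have hloc : IsLocalMin (Gfun Y) p :=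
    hpmin.isLocalMin (mem_nhds_iff.mpr ⟨U, hUK, hUopen, hpU⟩)
  have hloc' : IsLocalMin (Gfun Y) (p.1, p.2) := by rwa [Prod.mk.eta]
  -- row and column equations
  have hrow := fun i => row_eq Y p.1 p.2 hloc' hp1 i
  have hcol := fun j => col_eq Y p.1 p.2 hloc' hp2 j
  -- the multiplier vanishes
  have hNR : ((N : ℝ)) ≠ 0 := Nat.cast_ne_zero.mpr (by omega)
  have hq0 : Lsum p.1 - Lsum p.2 = 0 := by
    have hsum1 : ∑ i, p.1 i * ∑ j, Y i j * p.2 j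
        = (N : ℝ) * (1 - 2 * (Lsum p.1 - Lsum p.2)) := by
      rw [Finset.sum_congr rfl fun i _ => hrow i]
      simp [Finset.sum_const, nsmul_eq_mul]; ring
    have hsum2 : ∑ j, p.2 j * ∑ i, Y i j * p.1 i
        = (N : ℝ) * (1 - 2 * (Lsum p.2 - Lsum p.1)) := by
      rw [Finset.sum_congr rfl fun j _ => hcol j]
      simp [Finset.sum_const, nsmul_eq_mul]; ring
    have heq : ∑ i, p.1 i * ∑ j, Y i j * p.2 j = ∑ j, p.2 j * ∑ i, Y i j * p.1 i := by
      have h1 : ∑ i, p.1 i * ∑ j, Y i j * p.2 j = ∑ i, ∑ j, p.1 i * (Y i j * p.2 j) :=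
        Finset.sum_congr rfl fun i _ => Finset.mul_sum _ _ _
      have h2 : ∑ j, p.2 j * ∑ i, Y i j * p.1 i = ∑ j, ∑ i, p.1 i * (Y i j * p.2 j) :=
        Finset.sum_congr rfl fun j _ => by
          rw [Finset.mul_sum]
          exact Finset.sum_congr rfl fun i _ => by ring
      rw [h1, h2, Finset.sum_comm]
    rw [hsum1, hsum2] at heq
    have : (1 - 2 * (Lsum p.1 - Lsum p.2)) = (1 - 2 * (Lsum p.2 - Lsum p.1)) :=
      mul_left_cancel₀ hNR heq
    linarith
  refine ⟨p.1, p.2, hp1, hp2, ?_, ?_, ?_⟩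
  · intro i j
    rw [Matrix.mul_diagonal, Matrix.diagonal_mul]
    exact (mul_pos (mul_pos (hp1 i) (hY i j)) (hp2 j)).le
  · intro i
    have : ∑ j, (Matrix.diagonal p.1 * Y * Matrix.diagonal p.2) i j
        = p.1 i * ∑ j, Y i j * p.2 j := by
      rw [Finset.mul_sum]
      exact Finset.sum_congr rfl fun j _ => by
        rw [Matrix.mul_diagonal, Matrix.diagonal_mul]; ring
    rw [this, hrow i, hq0]
    ring
  · intro j
    have : ∑ i, (Matrix.diagonal p.1 * Y * Matrix.diagonal p.2) i j
        = p.2 j * ∑ i, Y i j * p.1 i := by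
      rw [Finset.mul_sum]
      exact Finset.sum_congr rfl fun i _ => by
        rw [Matrix.mul_diagonal, Matrix.diagonal_mul]; ring
    rw [this, hcol j]
    have : Lsum p.2 - Lsum p.1 = 0 := by linarith [hq0]
    rw [this]
    ring
end

section
/- Let N ≥ 1 and let Y be an N×N real matrix all of whose entries are strictly positive. If D₁, D₂ and D₁′, D₂′ are diagonal N×N matrices with strictly positive diagonal entries such that both D₁ · Y · D₂ and D₁′ · Y · D₂′ are doubly stochastic, then there exists a constant c > 0 such that D₁′ = c · D₁ and D₂′ = c⁻¹ · D₂. -/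
/-- Uniqueness part of Sinkhorn's theorem: the positive diagonal scaling matrices
making a strictly positive matrix doubly stochastic are unique up to a
multiplicative constant. -/
theorem sinkhorn_unique_up_to_constant (N : ℕ) (hN : 1 ≤ N)
    (Y : Matrix (Fin N) (Fin N) ℝ) (hY : ∀ i j, 0 < Y i j)
    (d₁ d₂ d₁' d₂' : Fin N → ℝ)
    (hd₁ : ∀ i, 0 < d₁ i) (hd₂ : ∀ i, 0 < d₂ i)
    (hd₁' : ∀ i, 0 < d₁' i) (hd₂' : ∀ i, 0 < d₂' i)
    (hDS : IsDoublyStochastic (Matrix.diagonal d₁ * Y * Matrix.diagonal d₂))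
    (hDS' : IsDoublyStochastic (Matrix.diagonal d₁' * Y * Matrix.diagonal d₂')) :
    ∃ c : ℝ, 0 < c ∧
      Matrix.diagonal d₁' = c • Matrix.diagonal d₁ ∧
      Matrix.diagonal d₂' = c⁻¹ • Matrix.diagonal d₂ := by
  have hNE : Nonempty (Fin N) := ⟨⟨0, hN⟩⟩
  set A : Fin N → Fin N → ℝ := fun i j => d₁ i * Y i j * d₂ j with hAdef
  have hApos : ∀ i j, 0 < A i j := fun i j =>
    mul_pos (mul_pos (hd₁ i) (hY i j)) (hd₂ j)
  set r : Fin N → ℝ := fun i => d₁' i / d₁ i with hrdef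
  set s : Fin N → ℝ := fun j => d₂' j / d₂ j with hsdef
  have hrpos : ∀ i, 0 < r i := fun i => div_pos (hd₁' i) (hd₁ i)
  have hspos : ∀ j, 0 < s j := fun j => div_pos (hd₂' j) (hd₂ j)
  have hrow : ∀ i, ∑ j, A i j = 1 := by
    intro i
    have := hDS.2.1 i
    simpa [Matrix.mul_diagonal, Matrix.diagonal_mul, A] using this
  have hcol : ∀ j, ∑ i, A i j = 1 := by
    intro j
    have := hDS.2.2 j
    simpa [Matrix.mul_diagonal, Matrix.diagonal_mul, A] using this
  have hentry : ∀ i j, d₁' i * Y i j * d₂' j = r i * (s j * A i j) := by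
    intro i j
    have h1 : (d₁ i) ≠ 0 := (hd₁ i).ne'
    have h2 : (d₂ j) ≠ 0 := (hd₂ j).ne'
    field_simp [r, s, A]
    simp only [r, s, A]
    rw [div_mul_div_comm, div_mul_eq_mul_div, eq_div_iff (mul_ne_zero h1 h2)]
    ring
  have hrow' : ∀ i, r i * ∑ j, s j * A i j = 1 := by
    intro i
    have h := hDS'.2.1 i
    simp only [Matrix.mul_diagonal, Matrix.diagonal_mul] at h
    calc r i * ∑ j, s j * A i j = ∑ j, r i * (s j * A i j) := by rw [Finset.mul_sum]
      _ = ∑ j, d₁' i * Y i j * d₂' j := by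
          refine Finset.sum_congr rfl fun j _ => ?_
          rw [hentry]
      _ = 1 := h
  have hcol' : ∀ j, s j * ∑ i, r i * A i j = 1 := by
    intro j
    have h := hDS'.2.2 j
    simp only [Matrix.mul_diagonal, Matrix.diagonal_mul] at h
    calc s j * ∑ i, r i * A i j = ∑ i, r i * (s j * A i j) := by
          rw [Finset.mul_sum]; refine Finset.sum_congr rfl fun i _ => ?_; ring
      _ = ∑ i, d₁' i * Y i j * d₂' j := by
          refine Finset.sum_congr rfl fun i _ => ?_
          rw [hentry]
      _ = 1 := h
  obtain ⟨i₀, -, hi₀⟩ := Finset.exists_max_image Finset.univ r ⟨Classical.arbitrary _, Finset.mem_univ _⟩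
  obtain ⟨j₀, -, hj₀⟩ := Finset.exists_min_image Finset.univ s ⟨Classical.arbitrary _, Finset.mem_univ _⟩
  -- 1 ≥ r i₀ * s j₀
  have hsum_ge : ∑ j, s j₀ * A i₀ j ≤ ∑ j, s j * A i₀ j := by
    refine Finset.sum_le_sum fun j _ => ?_
    exact mul_le_mul_of_nonneg_right (hj₀ j (Finset.mem_univ j)) (hApos i₀ j).le
  have hsum0 : ∑ j, s j₀ * A i₀ j = s j₀ := by
    rw [← Finset.mul_sum, hrow i₀, mul_one]
  have h1 : r i₀ * s j₀ ≤ 1 := by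
    calc r i₀ * s j₀ = r i₀ * ∑ j, s j₀ * A i₀ j := by rw [hsum0]
      _ ≤ r i₀ * ∑ j, s j * A i₀ j :=
          mul_le_mul_of_nonneg_left hsum_ge (hrpos i₀).le
      _ = 1 := hrow' i₀
  have h2 : 1 ≤ r i₀ * s j₀ := by
    have hle : ∑ i, r i * A i j₀ ≤ ∑ i, r i₀ * A i j₀ := by
      refine Finset.sum_le_sum fun i _ => ?_
      exact mul_le_mul_of_nonneg_right (hi₀ i (Finset.mem_univ i)) (hApos i j₀).le
    calc (1:ℝ) = s j₀ * ∑ i, r i * A i j₀ := (hcol' j₀).symm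
      _ ≤ s j₀ * ∑ i, r i₀ * A i j₀ :=
          mul_le_mul_of_nonneg_left hle (hspos j₀).le
      _ = s j₀ * r i₀ := by rw [← Finset.mul_sum, hcol j₀, mul_one]
      _ = r i₀ * s j₀ := mul_comm _ _
  have heq : r i₀ * s j₀ = 1 := le_antisymm h1 h2
  -- equality in the sum forces s constant
  have hsum_eq : ∑ j, s j₀ * A i₀ j = ∑ j, s j * A i₀ j := by
    have hr0 : r i₀ ≠ 0 := (hrpos i₀).ne'
    have := hrow' i₀
    have h' : r i₀ * ∑ j, s j₀ * A i₀ j = r i₀ * ∑ j, s j * A i₀ j := by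
      rw [hsum0, this, heq]
    exact mul_left_cancel₀ hr0 h'
  have hs_const : ∀ j, s j = s j₀ := by
    intro j
    have := (Finset.sum_eq_sum_iff_of_le
      (fun j _ => mul_le_mul_of_nonneg_right (hj₀ j (Finset.mem_univ j)) (hApos i₀ j).le)).mp
      hsum_eq j (Finset.mem_univ j)
    exact (mul_right_cancel₀ (hApos i₀ j).ne' this).symm
  have hr_const : ∀ i, r i = r i₀ := by
    intro i
    have h := hrow' i
    have hsum : ∑ j, s j * A i j = s j₀ := by
      calc ∑ j, s j * A i j = ∑ j, s j₀ * A i j := by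
            refine Finset.sum_congr rfl fun j _ => ?_; rw [hs_const j]
        _ = s j₀ := by rw [← Finset.mul_sum, hrow i, mul_one]
    rw [hsum] at h
    have := heq
    have hs0 : s j₀ ≠ 0 := (hspos j₀).ne'
    field_simp at h this
    -- h : r i * s j₀ = 1, this : r i₀ * s j₀ = 1
    have := h.trans this.symm
    exact mul_right_cancel₀ hs0 (this.trans (mul_comm _ _))
  refine ⟨r i₀, hrpos i₀, ?_, ?_⟩
  · have : d₁' = fun i => r i₀ * d₁ i := by
      funext i
      have h : d₁' i / d₁ i = r i₀ := hr_const i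
      rw [div_eq_iff (hd₁ i).ne'] at h
      exact h
    rw [this]
    ext i j
    by_cases h : i = j <;> simp [Matrix.diagonal, h]
  · have hc : (r i₀)⁻¹ = s j₀ := inv_eq_of_mul_eq_one_right heq
    have : d₂' = fun j => (r i₀)⁻¹ * d₂ j := by
      funext j
      rw [hc]
      have h : d₂' j / d₂ j = s j₀ := hs_const j
      rw [div_eq_iff (hd₂ j).ne'] at h
      exact h
    rw [this]
    ext i j
    by_cases h : i = j <;> simp [Matrix.diagonal, h]
end

section
/- Let N ≥ 1 and let Y be an N×N real matrix all of whose entries are strictly positive. If D₁, D₂ and D₁′, D₂′ are diagonal N×N matrices with strictly positive diagonal entries such that both D₁ · Y · D₂ and D₁′ · Y · D₂′ are doubly stochastic, then D₁ · Y · D₂ = D₁′ · Y · D₂′. In other words, the doubly stochastic matrix obtained by diagonal scaling of Y is unique. -/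
lemma sinkhorn_aux (N : ℕ) (hN : 1 ≤ N) (B B' : Matrix (Fin N) (Fin N) ℝ)
    (hB : IsDoublyStochastic B) (hB' : IsDoublyStochastic B')
    (hpos : ∀ i j, 0 < B' i j)
    (a b : Fin N → ℝ) (ha : ∀ i, 0 < a i) (hb : ∀ j, 0 < b j)
    (hrel : ∀ i j, B i j = a i * b j * B' i j) : B = B' := by
  haveI : NeZero N := ⟨by omega⟩
  obtain ⟨i0, -, hi0⟩ := Finset.exists_max_image Finset.univ a Finset.univ_nonempty
  obtain ⟨j0, -, hj0⟩ := Finset.exists_min_image Finset.univ b Finset.univ_nonempty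
  simp only [Finset.mem_univ, forall_true_left] at hi0 hj0
  have hrow : ∑ j, a i0 * b j * B' i0 j = 1 := by
    rw [← hB.2.1 i0]; exact Finset.sum_congr rfl fun j _ => (hrel i0 j).symm
  have hcol : ∑ i, a i * b j0 * B' i j0 = 1 := by
    rw [← hB.2.2 j0]; exact Finset.sum_congr rfl fun i _ => (hrel i j0).symm
  have hrow' : ∑ j, a i0 * b j0 * B' i0 j = a i0 * b j0 := by
    rw [← Finset.mul_sum, hB'.2.1 i0, mul_one]
  have hcol' : ∑ i, a i0 * b j0 * B' i j0 = a i0 * b j0 := by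
    rw [← Finset.mul_sum, hB'.2.2 j0, mul_one]
  have hle1 : ∀ j, a i0 * b j0 * B' i0 j ≤ a i0 * b j * B' i0 j := fun j => by
    have := hj0 j
    have h1 : a i0 * b j0 ≤ a i0 * b j := by nlinarith [ha i0]
    nlinarith [(hpos i0 j).le]
  have hle2 : ∀ i, a i * b j0 * B' i j0 ≤ a i0 * b j0 * B' i j0 := fun i => by
    have := hi0 i
    have h1 : a i * b j0 ≤ a i0 * b j0 := by nlinarith [hb j0]
    nlinarith [(hpos i j0).le]
  have hub : a i0 * b j0 ≤ 1 := by
    rw [← hrow, ← hrow']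
    exact Finset.sum_le_sum fun j _ => hle1 j
  have hlb : 1 ≤ a i0 * b j0 := by
    rw [← hcol, ← hcol']
    exact Finset.sum_le_sum fun i _ => hle2 i
  have heq : a i0 * b j0 = 1 := le_antisymm hub hlb
  -- equality in sums
  have hbconst : ∀ j, b j = b j0 := by
    have hs : ∑ j, a i0 * b j0 * B' i0 j = ∑ j, a i0 * b j * B' i0 j := by
      rw [hrow, hrow', heq]
    have := (Finset.sum_eq_sum_iff_of_le (fun j _ => hle1 j)).mp hs
    intro j
    have hj := this j (Finset.mem_univ j)
    have h1 := mul_right_cancel₀ (hpos i0 j).ne' hj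
    exact (mul_left_cancel₀ (ha i0).ne' h1).symm
  have haconst : ∀ i, a i = a i0 := by
    have hs : ∑ i, a i * b j0 * B' i j0 = ∑ i, a i0 * b j0 * B' i j0 := by
      rw [hcol, hcol', heq]
    have := (Finset.sum_eq_sum_iff_of_le (fun i _ => hle2 i)).mp hs
    intro i
    have hi := this i (Finset.mem_univ i)
    have h1 := mul_right_cancel₀ (hpos i j0).ne' hi
    exact mul_right_cancel₀ (hb j0).ne' h1
  ext i j
  rw [hrel i j, haconst i, hbconst j, heq, one_mul]

/-- Consequence of Sinkhorn's theorem: the doubly stochastic matrix obtained by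
positive diagonal scaling of an entrywise strictly positive matrix is unique. -/
theorem sinkhorn_scaling_unique (N : ℕ) (hN : 1 ≤ N)
    (Y : Matrix (Fin N) (Fin N) ℝ) (hY : ∀ i j, 0 < Y i j)
    (d₁ d₂ d₁' d₂' : Fin N → ℝ)
    (hd₁ : ∀ i, 0 < d₁ i) (hd₂ : ∀ i, 0 < d₂ i)
    (hd₁' : ∀ i, 0 < d₁' i) (hd₂' : ∀ i, 0 < d₂' i)
    (hDS : IsDoublyStochastic (Matrix.diagonal d₁ * Y * Matrix.diagonal d₂))
    (hDS' : IsDoublyStochastic (Matrix.diagonal d₁' * Y * Matrix.diagonal d₂')) :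
    Matrix.diagonal d₁ * Y * Matrix.diagonal d₂ =
      Matrix.diagonal d₁' * Y * Matrix.diagonal d₂' := by
  apply sinkhorn_aux N hN _ _ hDS hDS'
  · intro i j
    simp only [Matrix.mul_diagonal, Matrix.diagonal_mul]
    exact mul_pos (mul_pos (hd₁' i) (hY i j)) (hd₂' j)
  · exact fun i => div_pos (hd₁ i) (hd₁' i)
  · exact fun j => div_pos (hd₂ j) (hd₂' j)
  · intro i j
    simp only [Matrix.mul_diagonal, Matrix.diagonal_mul]
    have h1 := (hd₁' i).ne'
    have h2 := (hd₂' j).ne'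
    field_simp
end

section
/- Let N ≥ 1 and let Y be an N×N real matrix all of whose entries are strictly positive. Define the column-normalization map by (colNorm Y)_{ij} = Y_{ij} / (Σ_{i'} Y_{i'j}) and the row-normalization map by (rowNorm Y)_{ij} = Y_{ij} / (Σ_{j'} Y_{ij'}). Define the sequence Y⁽⁰⁾ = Y, Y⁽²ˡ⁺¹⁾ = colNorm(Y⁽²ˡ⁾), Y⁽²ˡ⁺²⁾ = rowNorm(Y⁽²ˡ⁺¹⁾). Then the sequence Y⁽ᵏ⁾ converges entrywise as k → ∞ to the unique doubly stochastic matrix of the form D₁ · Y · D₂ with D₁, D₂ diagonal matrices having strictly positive diagonal entries. -/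
open Filter Topology

/-- Column normalization: each column is rescaled so that its sum is 1. -/
noncomputable def colNorm {N : ℕ} (Y : Matrix (Fin N) (Fin N) ℝ) : Matrix (Fin N) (Fin N) ℝ :=
  Matrix.of fun i j => Y i j / ∑ i', Y i' j

/-- Row normalization: each row is rescaled so that its sum is 1. -/
noncomputable def rowNorm {N : ℕ} (Y : Matrix (Fin N) (Fin N) ℝ) : Matrix (Fin N) (Fin N) ℝ :=
  Matrix.of fun i j => Y i j / ∑ j', Y i j'

/-- The Sinkhorn iteration: `Y⁽⁰⁾ = Y`, `Y⁽²ˡ⁺¹⁾ = colNorm Y⁽²ˡ⁾`,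
`Y⁽²ˡ⁺²⁾ = rowNorm Y⁽²ˡ⁺¹⁾`. -/
noncomputable def sinkSeq {N : ℕ} (Y : Matrix (Fin N) (Fin N) ℝ) : ℕ → Matrix (Fin N) (Fin N) ℝ
  | 0 => Y
  | (k + 1) => if k % 2 = 0 then colNorm (sinkSeq Y k) else rowNorm (sinkSeq Y k)

section SinkhornAux

open Finset
set_option linter.unusedSectionVars false
set_option linter.unusedVariables false

variable {N : ℕ} [Nonempty (Fin N)]

noncomputable def cS (Y : Matrix (Fin N) (Fin N) ℝ) (x : Fin N → ℝ) (j : Fin N) : ℝ :=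
  ∑ i, Y i j * x i

noncomputable def rS (Y : Matrix (Fin N) (Fin N) ℝ) (x : Fin N → ℝ) (i : Fin N) : ℝ :=
  ∑ j, Y i j * x j

noncomputable def Fm (Y : Matrix (Fin N) (Fin N) ℝ) (x : Fin N → ℝ) (i : Fin N) : ℝ :=
  1 / rS Y (fun j => 1 / cS Y x j) i

lemma cS_eq_rS_transpose (Y : Matrix (Fin N) (Fin N) ℝ) (x : Fin N → ℝ) :
    cS Y x = rS Y.transpose x := rfl

lemma cS_pos {Y : Matrix (Fin N) (Fin N) ℝ} (hY : ∀ i j, 0 < Y i j)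
    {x : Fin N → ℝ} (hx : ∀ i, 0 < x i) [Nonempty (Fin N)] (j : Fin N) : 0 < cS Y x j :=
  Finset.sum_pos (fun i _ => mul_pos (hY i j) (hx i)) Finset.univ_nonempty

lemma rS_pos {Y : Matrix (Fin N) (Fin N) ℝ} (hY : ∀ i j, 0 < Y i j)
    {x : Fin N → ℝ} (hx : ∀ i, 0 < x i) [Nonempty (Fin N)] (i : Fin N) : 0 < rS Y x i :=
  Finset.sum_pos (fun j _ => mul_pos (hY i j) (hx j)) Finset.univ_nonempty

lemma Fm_pos {Y : Matrix (Fin N) (Fin N) ℝ} (hY : ∀ i j, 0 < Y i j)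
    {x : Fin N → ℝ} (hx : ∀ i, 0 < x i) [Nonempty (Fin N)] (i : Fin N) : 0 < Fm Y x i := by
  have h1 : ∀ j, 0 < 1 / cS Y x j := fun j => by exact one_div_pos.2 (cS_pos hY hx j)
  exact one_div_pos.2 (rS_pos hY (fun j => one_div_pos.2 (cS_pos hY hx j)) i)

noncomputable def mn (u v : Fin N → ℝ) : ℝ :=
  Finset.univ.inf' Finset.univ_nonempty (fun j => u j / v j)

noncomputable def mx (u v : Fin N → ℝ) : ℝ :=
  Finset.univ.sup' Finset.univ_nonempty (fun j => u j / v j)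

noncomputable def dl (u v : Fin N → ℝ) : ℝ := mx u v / mn u v - 1

lemma mn_le (u v : Fin N → ℝ) (j : Fin N) : mn u v ≤ u j / v j :=
  Finset.inf'_le _ (Finset.mem_univ j)

lemma le_mx (u v : Fin N → ℝ) (j : Fin N) : u j / v j ≤ mx u v :=
  Finset.le_sup' (fun j => u j / v j) (Finset.mem_univ j)

lemma mn_pos {u v : Fin N → ℝ} (hu : ∀ i, 0 < u i) (hv : ∀ i, 0 < v i) : 0 < mn u v := by
  rw [mn, Finset.lt_inf'_iff]
  exact fun j _ => div_pos (hu j) (hv j)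

lemma mn_le_mx {u v : Fin N → ℝ} : mn u v ≤ mx u v :=
  le_trans (mn_le u v (Classical.arbitrary _)) (le_mx u v _)

lemma mx_pos {u v : Fin N → ℝ} (hu : ∀ i, 0 < u i) (hv : ∀ i, 0 < v i) : 0 < mx u v :=
  lt_of_lt_of_le (mn_pos hu hv) mn_le_mx

lemma dl_nonneg {u v : Fin N → ℝ} (hu : ∀ i, 0 < u i) (hv : ∀ i, 0 < v i) : 0 ≤ dl u v := by
  have h1 := mn_pos hu hv
  have h2 := mn_le_mx (u := u) (v := v)
  rw [dl, sub_nonneg, le_div_iff₀ h1]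
  linarith

lemma mn_mul_le {u v : Fin N → ℝ} (hv : ∀ i, 0 < v i) (j : Fin N) : mn u v * v j ≤ u j := by
  have := mn_le u v j
  rwa [le_div_iff₀ (hv j)] at this

lemma le_mx_mul {u v : Fin N → ℝ} (hv : ∀ i, 0 < v i) (j : Fin N) : u j ≤ mx u v * v j := by
  have := le_mx u v j
  rwa [div_le_iff₀ (hv j)] at this

lemma mn_inv {u v : Fin N → ℝ} (hu : ∀ i, 0 < u i) (hv : ∀ i, 0 < v i) :
    mn (fun j => 1 / u j) (fun j => 1 / v j) = (mx u v)⁻¹ := by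
  have hratio : ∀ j : Fin N, (1 / u j) / (1 / v j) = (u j / v j)⁻¹ := by
    intro j; field_simp
  have hmxp := mx_pos hu hv
  apply le_antisymm
  · obtain ⟨j, -, hj⟩ := Finset.exists_mem_eq_sup' (Finset.univ_nonempty (α := Fin N))
      (fun j => u j / v j)
    calc mn (fun j => 1 / u j) (fun j => 1 / v j) ≤ (1 / u j) / (1 / v j) := mn_le _ _ j
    _ = (u j / v j)⁻¹ := hratio j
    _ = (mx u v)⁻¹ := by rw [mx, hj]
  · rw [mn, Finset.le_inf'_iff]
    intro j _
    rw [hratio j]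
    exact inv_anti₀ (div_pos (hu j) (hv j)) (le_mx u v j)

lemma mx_inv {u v : Fin N → ℝ} (hu : ∀ i, 0 < u i) (hv : ∀ i, 0 < v i) :
    mx (fun j => 1 / u j) (fun j => 1 / v j) = (mn u v)⁻¹ := by
  have hratio : ∀ j : Fin N, (1 / u j) / (1 / v j) = (u j / v j)⁻¹ := by
    intro j; field_simp
  have hmnp := mn_pos hu hv
  apply le_antisymm
  · rw [mx, Finset.sup'_le_iff]
    intro j _
    rw [hratio j]
    exact inv_anti₀ hmnp (mn_le u v j)
  · obtain ⟨j, -, hj⟩ := Finset.exists_mem_eq_inf' (Finset.univ_nonempty (α := Fin N))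
      (fun j => u j / v j)
    calc (mn u v)⁻¹ = (u j / v j)⁻¹ := by rw [mn, hj]
    _ = (1 / u j) / (1 / v j) := (hratio j).symm
    _ ≤ _ := le_mx (fun j => 1 / u j) (fun j => 1 / v j) j

lemma dl_inv {u v : Fin N → ℝ} (hu : ∀ i, 0 < u i) (hv : ∀ i, 0 < v i) :
    dl (fun j => 1 / u j) (fun j => 1 / v j) = dl u v := by
  have h1 := mn_pos hu hv
  have h2 := mx_pos hu hv
  rw [dl, dl, mn_inv hu hv, mx_inv hu hv]
  congr 1
  rw [div_eq_div_iff (by positivity) (by positivity)]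
  field_simp
/-- Upper bound in the averaging lemma. -/
lemma rS_upper (Y : Matrix (Fin N) (Fin N) ℝ) (m M : ℝ) (hm : 0 < m)
    (hlb : ∀ i j, m ≤ Y i j) (hub : ∀ i j, Y i j ≤ M)
    (u v : Fin N → ℝ) (hv : ∀ j, 0 < v j) (b : ℝ) (hb : ∀ j, u j ≤ b * v j) (i : Fin N) :
    rS Y u i ≤ (m / M * ((∑ j, u j) / (∑ j, v j)) + (1 - m / M) * b) * rS Y v i := by
  have hM : 0 < M := lt_of_lt_of_le hm ((hlb i i).trans (hub i i))
  set V : ℝ := ∑ j, v j with hV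
  have hVpos : 0 < V := Finset.sum_pos (fun j _ => hv j) Finset.univ_nonempty
  set W : ℝ := rS Y v i with hW
  have hWpos : 0 < W := Finset.sum_pos (fun j _ => mul_pos (lt_of_lt_of_le hm (hlb i j)) (hv j)) Finset.univ_nonempty
  have hWle : W ≤ M * V := by
    rw [hW, hV, rS, Finset.mul_sum]
    exact Finset.sum_le_sum fun j _ => mul_le_mul_of_nonneg_right (hub i j) (hv j).le
  set c : ℝ := m / (M * V) * W with hc
  have hcm : c ≤ m := by
    rw [hc, div_mul_eq_mul_div, div_le_iff₀ (by positivity)]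
    nlinarith
  have hsplit : rS Y u i = (∑ j, (Y i j - c) * u j) + c * (∑ j, u j) := by
    rw [rS, Finset.mul_sum, ← Finset.sum_add_distrib]
    congr 1; ext j; ring
  have hterm : (∑ j, (Y i j - c) * u j) ≤ (∑ j, (Y i j - c) * (b * v j)) := by
    apply Finset.sum_le_sum
    intro j _
    exact mul_le_mul_of_nonneg_left (hb j) (by linarith [hlb i j])
  have hsum2 : (∑ j, (Y i j - c) * (b * v j)) = b * (W - c * V) := by
    rw [hW, hV, rS]
    simp only [mul_sub, Finset.mul_sum, ← Finset.sum_sub_distrib]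
    congr 1; ext j; ring
  have hcV : c * V = m / M * W := by
    rw [hc]; field_simp
  have hcu : c * (∑ j, u j) = m / M * ((∑ j, u j) / V) * W := by
    rw [hc]; field_simp
  calc rS Y u i = (∑ j, (Y i j - c) * u j) + c * (∑ j, u j) := hsplit
    _ ≤ b * (W - c * V) + c * (∑ j, u j) := by linarith [hterm, hsum2.symm ▸ hterm]
    _ = b * (W - m / M * W) + m / M * ((∑ j, u j) / V) * W := by rw [hcV, hcu]
    _ = (m / M * ((∑ j, u j) / V) + (1 - m / M) * b) * W := by ring

lemma rS_lower (Y : Matrix (Fin N) (Fin N) ℝ) (m M : ℝ) (hm : 0 < m)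
    (hlb : ∀ i j, m ≤ Y i j) (hub : ∀ i j, Y i j ≤ M)
    (u v : Fin N → ℝ) (hv : ∀ j, 0 < v j) (a : ℝ) (ha : ∀ j, a * v j ≤ u j) (i : Fin N) :
    (m / M * ((∑ j, u j) / (∑ j, v j)) + (1 - m / M) * a) * rS Y v i ≤ rS Y u i := by
  have hM : 0 < M := lt_of_lt_of_le hm ((hlb i i).trans (hub i i))
  set V : ℝ := ∑ j, v j with hV
  have hVpos : 0 < V := Finset.sum_pos (fun j _ => hv j) Finset.univ_nonempty
  set W : ℝ := rS Y v i with hW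
  have hWpos : 0 < W := Finset.sum_pos (fun j _ => mul_pos (lt_of_lt_of_le hm (hlb i j)) (hv j)) Finset.univ_nonempty
  have hWle : W ≤ M * V := by
    rw [hW, hV, rS, Finset.mul_sum]
    exact Finset.sum_le_sum fun j _ => mul_le_mul_of_nonneg_right (hub i j) (hv j).le
  set c : ℝ := m / (M * V) * W with hc
  have hcm : c ≤ m := by
    rw [hc, div_mul_eq_mul_div, div_le_iff₀ (by positivity)]
    nlinarith
  have hsplit : rS Y u i = (∑ j, (Y i j - c) * u j) + c * (∑ j, u j) := by
    rw [rS, Finset.mul_sum, ← Finset.sum_add_distrib]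
    congr 1; ext j; ring
  have hterm : (∑ j, (Y i j - c) * (a * v j)) ≤ (∑ j, (Y i j - c) * u j) := by
    apply Finset.sum_le_sum
    intro j _
    exact mul_le_mul_of_nonneg_left (ha j) (by linarith [hlb i j])
  have hsum2 : (∑ j, (Y i j - c) * (a * v j)) = a * (W - c * V) := by
    rw [hW, hV, rS]
    simp only [mul_sub, Finset.mul_sum, ← Finset.sum_sub_distrib]
    congr 1; ext j; ring
  have hcV : c * V = m / M * W := by
    rw [hc]; field_simp
  have hcu : c * (∑ j, u j) = m / M * ((∑ j, u j) / V) * W := by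
    rw [hc]; field_simp
  calc (m / M * ((∑ j, u j) / V) + (1 - m / M) * a) * W
      = a * (W - m / M * W) + m / M * ((∑ j, u j) / V) * W := by ring
    _ = a * (W - c * V) + c * (∑ j, u j) := by rw [hcV, hcu]
    _ ≤ (∑ j, (Y i j - c) * u j) + c * (∑ j, u j) := by
        rw [← hsum2] at *; linarith [hterm]
    _ = rS Y u i := hsplit.symm

/-- Contraction of the projective gap under `rS`. -/
lemma dl_rS (Y : Matrix (Fin N) (Fin N) ℝ) (m M : ℝ) (hm : 0 < m)
    (hlb : ∀ i j, m ≤ Y i j) (hub : ∀ i j, Y i j ≤ M)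
    {u v : Fin N → ℝ} (hu : ∀ j, 0 < u j) (hv : ∀ j, 0 < v j) :
    dl (rS Y u) (rS Y v) ≤ (1 - m / M) * dl u v := by
  have hY : ∀ i j, 0 < Y i j := fun i j => lt_of_lt_of_le hm (hlb i j)
  have hM : 0 < M := by
    have i := Classical.arbitrary (Fin N)
    exact lt_of_lt_of_le hm ((hlb i i).trans (hub i i))
  set lam : ℝ := m / M with hlamdef
  have hlam1 : lam ≤ 1 := by
    have i := Classical.arbitrary (Fin N)
    rw [hlamdef, div_le_one hM]
    exact (hlb i i).trans (hub i i)
  have hlam0 : 0 < lam := div_pos hm hM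
  set a : ℝ := mn u v with ha
  set b : ℝ := mx u v with hb
  set μ : ℝ := (∑ j, u j) / (∑ j, v j) with hμ
  have hapos : 0 < a := mn_pos hu hv
  have hab : a ≤ b := mn_le_mx
  have hVpos : 0 < ∑ j, v j := Finset.sum_pos (fun j _ => hv j) Finset.univ_nonempty
  have hμa : a ≤ μ := by
    rw [hμ, le_div_iff₀ hVpos, Finset.mul_sum]
    exact Finset.sum_le_sum fun j _ => mn_mul_le hv j
  have hμpos : 0 < μ := lt_of_lt_of_le hapos hμa
  set A : ℝ := lam * μ + (1 - lam) * a with hA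
  set B : ℝ := lam * μ + (1 - lam) * b with hB
  have hApos : 0 < A := by nlinarith [mul_pos hlam0 hμpos, mul_nonneg (by linarith : (0:ℝ) ≤ 1 - lam) hapos.le]
  have haA : a ≤ A := by nlinarith [mul_nonneg hlam0.le (sub_nonneg.2 hμa)]
  have hAB : A ≤ B := by nlinarith [mul_nonneg (by linarith : (0:ℝ) ≤ 1 - lam) (sub_nonneg.2 hab)]
  have hA' : ∀ i, A * rS Y v i ≤ rS Y u i :=
    rS_lower Y m M hm hlb hub u v hv a (mn_mul_le hv)
  have hB' : ∀ i, rS Y u i ≤ B * rS Y v i :=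
    rS_upper Y m M hm hlb hub u v hv b (le_mx_mul hv)
  have hrv : ∀ i, 0 < rS Y v i := rS_pos hY hv
  have hru : ∀ i, 0 < rS Y u i := rS_pos hY hu
  have hmn' : A ≤ mn (rS Y u) (rS Y v) := by
    rw [mn, Finset.le_inf'_iff]
    intro i _
    rw [le_div_iff₀ (hrv i)]
    exact hA' i
  have hmx' : mx (rS Y u) (rS Y v) ≤ B := by
    rw [mx, Finset.sup'_le_iff]
    intro i _
    rw [div_le_iff₀ (hrv i)]
    exact hB' i
  have hstep : mx (rS Y u) (rS Y v) / mn (rS Y u) (rS Y v) ≤ B / A :=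
    div_le_div₀ (by linarith) hmx' hApos hmn'
  have h1 : B / A - 1 = (1 - lam) * (b - a) / A := by
    rw [div_sub_one hApos.ne']
    congr 1
    rw [hB, hA]
    ring
  have h2 : (1 - lam) * (b - a) / A ≤ (1 - lam) * (b - a) / a :=
    div_le_div_of_nonneg_left (by nlinarith) hapos haA
  have h3 : (1 - lam) * (b - a) / a = (1 - lam) * (b / a - 1) := by
    rw [div_sub_one hapos.ne', mul_div_assoc]
  calc dl (rS Y u) (rS Y v) = mx (rS Y u) (rS Y v) / mn (rS Y u) (rS Y v) - 1 := rfl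
    _ ≤ B / A - 1 := by linarith
    _ = (1 - lam) * (b - a) / A := h1
    _ ≤ (1 - lam) * (b - a) / a := h2
    _ = (1 - lam) * (b / a - 1) := h3
    _ = (1 - lam) * dl u v := rfl

lemma dl_cS (Y : Matrix (Fin N) (Fin N) ℝ) (m M : ℝ) (hm : 0 < m)
    (hlb : ∀ i j, m ≤ Y i j) (hub : ∀ i j, Y i j ≤ M)
    {u v : Fin N → ℝ} (hu : ∀ j, 0 < u j) (hv : ∀ j, 0 < v j) :
    dl (cS Y u) (cS Y v) ≤ (1 - m / M) * dl u v := by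
  rw [cS_eq_rS_transpose, cS_eq_rS_transpose]
  exact dl_rS Y.transpose m M hm (fun i j => hlb j i) (fun i j => hub j i) hu hv

lemma dl_Fm (Y : Matrix (Fin N) (Fin N) ℝ) (m M : ℝ) (hm : 0 < m)
    (hlb : ∀ i j, m ≤ Y i j) (hub : ∀ i j, Y i j ≤ M)
    {u v : Fin N → ℝ} (hu : ∀ j, 0 < u j) (hv : ∀ j, 0 < v j) :
    dl (Fm Y u) (Fm Y v) ≤ ((1 - m / M) * (1 - m / M)) * dl u v := by
  have hY : ∀ i j, 0 < Y i j := fun i j => lt_of_lt_of_le hm (hlb i j)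
  have hM : 0 < M := by
    have i := Classical.arbitrary (Fin N)
    exact lt_of_lt_of_le hm ((hlb i i).trans (hub i i))
  have hθ : 0 ≤ 1 - m / M := by
    have i := Classical.arbitrary (Fin N)
    have : m / M ≤ 1 := by
      rw [div_le_one hM]; exact (hlb i i).trans (hub i i)
    linarith
  have hcu : ∀ j, 0 < cS Y u j := cS_pos hY hu
  have hcv : ∀ j, 0 < cS Y v j := cS_pos hY hv
  have hicu : ∀ j, 0 < 1 / cS Y u j := fun j => one_div_pos.2 (hcu j)
  have hicv : ∀ j, 0 < 1 / cS Y v j := fun j => one_div_pos.2 (hcv j)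
  have hru : ∀ i, 0 < rS Y (fun j => 1 / cS Y u j) i := rS_pos hY hicu
  have hrv : ∀ i, 0 < rS Y (fun j => 1 / cS Y v j) i := rS_pos hY hicv
  have h1 : dl (cS Y u) (cS Y v) ≤ (1 - m / M) * dl u v := dl_cS Y m M hm hlb hub hu hv
  have h2 : dl (fun j => 1 / cS Y u j) (fun j => 1 / cS Y v j) = dl (cS Y u) (cS Y v) :=
    dl_inv hcu hcv
  have h3 : dl (rS Y (fun j => 1 / cS Y u j)) (rS Y (fun j => 1 / cS Y v j)) ≤
      (1 - m / M) * dl (fun j => 1 / cS Y u j) (fun j => 1 / cS Y v j) :=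
    dl_rS Y m M hm hlb hub hicu hicv
  have h4 : dl (Fm Y u) (Fm Y v) =
      dl (rS Y (fun j => 1 / cS Y u j)) (rS Y (fun j => 1 / cS Y v j)) := dl_inv hru hrv
  rw [h4]
  calc dl (rS Y (fun j => 1 / cS Y u j)) (rS Y (fun j => 1 / cS Y v j))
      ≤ (1 - m / M) * dl (cS Y u) (cS Y v) := by rw [← h2]; exact h3
    _ ≤ ((1 - m / M) * (1 - m / M)) * dl u v := by nlinarith [dl_nonneg hu hv]

noncomputable def useq (Y : Matrix (Fin N) (Fin N) ℝ) : ℕ → Fin N → ℝ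
  | 0 => fun _ => 1
  | k + 1 => Fm Y (useq Y k)

lemma useq_pos {Y : Matrix (Fin N) (Fin N) ℝ} (hY : ∀ i j, 0 < Y i j) :
    ∀ k i, 0 < useq Y k i := by
  intro k
  induction k with
  | zero => exact fun i => one_pos
  | succ k ih => exact fun i => Fm_pos hY ih i

lemma dl_useq (Y : Matrix (Fin N) (Fin N) ℝ) (m M : ℝ) (hm : 0 < m)
    (hlb : ∀ i j, m ≤ Y i j) (hub : ∀ i j, Y i j ≤ M) (k : ℕ) :
    dl (useq Y (k + 1)) (useq Y k) ≤
      ((1 - m / M) * (1 - m / M)) ^ k * dl (useq Y 1) (useq Y 0) := by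
  have hY : ∀ i j, 0 < Y i j := fun i j => lt_of_lt_of_le hm (hlb i j)
  have hM : 0 < M := by
    have i := Classical.arbitrary (Fin N)
    exact lt_of_lt_of_le hm ((hlb i i).trans (hub i i))
  have hθ : 0 ≤ (1 - m / M) * (1 - m / M) := by
    have i := Classical.arbitrary (Fin N)
    have : m / M ≤ 1 := by
      rw [div_le_one hM]; exact (hlb i i).trans (hub i i)
    nlinarith
  induction k with
  | zero => simp
  | succ k ih =>
      calc dl (useq Y (k + 2)) (useq Y (k + 1))
          ≤ ((1 - m / M) * (1 - m / M)) * dl (useq Y (k + 1)) (useq Y k) :=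
            dl_Fm Y m M hm hlb hub (useq_pos hY (k + 1)) (useq_pos hY k)
        _ ≤ ((1 - m / M) * (1 - m / M)) *
            (((1 - m / M) * (1 - m / M)) ^ k * dl (useq Y 1) (useq Y 0)) :=
            mul_le_mul_of_nonneg_left ih hθ
        _ = ((1 - m / M) * (1 - m / M)) ^ (k + 1) * dl (useq Y 1) (useq Y 0) := by ring

lemma log_ratio_bound {u' u : Fin N → ℝ} (hu' : ∀ i, 0 < u' i) (hu : ∀ i, 0 < u i)
    (i0 i : Fin N) :
    |Real.log (u' i / u' i0) - Real.log (u i / u i0)| ≤ dl u' u := by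
  have hmn : 0 < mn u' u := mn_pos hu' hu
  have hmx : 0 < mx u' u := mx_pos hu' hu
  have hr : ∀ j, 0 < u' j / u j := fun j => div_pos (hu' j) (hu j)
  have key : ∀ j, Real.log (mn u' u) ≤ Real.log (u' j / u j) ∧
      Real.log (u' j / u j) ≤ Real.log (mx u' u) := fun j =>
    ⟨Real.log_le_log hmn (mn_le u' u j), Real.log_le_log (hr j) (le_mx u' u j)⟩
  have hrw : Real.log (u' i / u' i0) - Real.log (u i / u i0) =
      Real.log (u' i / u i) - Real.log (u' i0 / u i0) := by
    rw [Real.log_div (hu' i).ne' (hu' i0).ne', Real.log_div (hu i).ne' (hu i0).ne',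
      Real.log_div (hu' i).ne' (hu i).ne', Real.log_div (hu' i0).ne' (hu i0).ne']
    ring
  rw [hrw]
  have hb : |Real.log (u' i / u i) - Real.log (u' i0 / u i0)| ≤
      Real.log (mx u' u) - Real.log (mn u' u) := by
    rw [abs_sub_le_iff]
    constructor
    · linarith [(key i).2, (key i0).1]
    · linarith [(key i0).2, (key i).1]
  have hlog : Real.log (mx u' u) - Real.log (mn u' u) = Real.log (mx u' u / mn u' u) :=
    (Real.log_div hmx.ne' hmn.ne').symm
  have hle : Real.log (mx u' u / mn u' u) ≤ mx u' u / mn u' u - 1 :=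
    Real.log_le_sub_one_of_pos (div_pos hmx hmn)
  calc |Real.log (u' i / u i) - Real.log (u' i0 / u i0)|
      ≤ Real.log (mx u' u) - Real.log (mn u' u) := hb
    _ = Real.log (mx u' u / mn u' u) := hlog
    _ ≤ mx u' u / mn u' u - 1 := hle
    _ = dl u' u := rfl

lemma exists_limit (Y : Matrix (Fin N) (Fin N) ℝ) (m M : ℝ) (hm : 0 < m)
    (hlb : ∀ i j, m ≤ Y i j) (hub : ∀ i j, Y i j ≤ M) (i0 : Fin N) :
    ∃ w : Fin N → ℝ, (∀ i, 0 < w i) ∧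
      ∀ i, Tendsto (fun k => useq Y k i / useq Y k i0) atTop (𝓝 (w i)) := by
  have hY : ∀ i j, 0 < Y i j := fun i j => lt_of_lt_of_le hm (hlb i j)
  have hM : 0 < M := lt_of_lt_of_le hm ((hlb i0 i0).trans (hub i0 i0))
  set ρ : ℝ := (1 - m / M) * (1 - m / M) with hρdef
  have hθ0 : 0 ≤ 1 - m / M := by
    have : m / M ≤ 1 := by rw [div_le_one hM]; exact (hlb i0 i0).trans (hub i0 i0)
    linarith
  have hθ1 : 1 - m / M < 1 := by
    have : 0 < m / M := div_pos hm hM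
    linarith
  have hρ1 : ρ < 1 := by nlinarith
  set C : ℝ := dl (useq Y 1) (useq Y 0) with hC
  set L : ℕ → Fin N → ℝ := fun k i => Real.log (useq Y k i / useq Y k i0) with hL
  have hcauchy : ∀ i, CauchySeq (fun k => L k i) := by
    intro i
    apply cauchySeq_of_le_geometric ρ C hρ1
    intro k
    rw [Real.dist_eq]
    calc |L k i - L (k + 1) i| = |L (k + 1) i - L k i| := abs_sub_comm _ _
      _ ≤ dl (useq Y (k + 1)) (useq Y k) :=
          log_ratio_bound (useq_pos hY (k + 1)) (useq_pos hY k) i0 i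
      _ ≤ ρ ^ k * C := dl_useq Y m M hm hlb hub k
      _ = C * ρ ^ k := mul_comm _ _
  have hlim : ∀ i, ∃ l : ℝ, Tendsto (fun k => L k i) atTop (𝓝 l) := fun i =>
    cauchySeq_tendsto_of_complete (hcauchy i)
  choose Λ hΛ using hlim
  refine ⟨fun i => Real.exp (Λ i), fun i => Real.exp_pos _, fun i => ?_⟩
  have h1 : Tendsto (fun k => Real.exp (L k i)) atTop (𝓝 (Real.exp (Λ i))) :=
    (Real.continuous_exp.tendsto (Λ i)).comp (hΛ i)
  convert h1 using 2 with k
  rw [hL]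
  exact (Real.exp_log (div_pos (useq_pos hY k i) (useq_pos hY k i0))).symm

noncomputable def Pm (Y : Matrix (Fin N) (Fin N) ℝ) (x : Fin N → ℝ) :
    Matrix (Fin N) (Fin N) ℝ := Matrix.of fun i j => x i * Y i j / cS Y x j

noncomputable def Qm (Y : Matrix (Fin N) (Fin N) ℝ) (x : Fin N → ℝ) :
    Matrix (Fin N) (Fin N) ℝ := Matrix.of fun i j => Fm Y x i * Y i j / cS Y x j

lemma cS_smul (Y : Matrix (Fin N) (Fin N) ℝ) (x : Fin N → ℝ) (c : ℝ) (j : Fin N) :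
    cS Y (fun i => c * x i) j = c * cS Y x j := by
  rw [cS, cS, Finset.mul_sum]
  congr 1; ext i; ring

lemma rS_smul (Y : Matrix (Fin N) (Fin N) ℝ) (x : Fin N → ℝ) (c : ℝ) (i : Fin N) :
    rS Y (fun j => c * x j) i = c * rS Y x i := by
  rw [rS, rS, Finset.mul_sum]
  congr 1; ext j; ring

lemma Fm_smul {Y : Matrix (Fin N) (Fin N) ℝ} (hY : ∀ i j, 0 < Y i j)
    {x : Fin N → ℝ} (hx : ∀ i, 0 < x i) {c : ℝ} (hc : c ≠ 0) (i : Fin N) :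
    Fm Y (fun i => c * x i) i = c * Fm Y x i := by
  have hfun : (fun j => 1 / cS Y (fun i => c * x i) j) =
      fun j => (1 / c) * (1 / cS Y x j) := by
    funext j
    rw [cS_smul]
    field_simp
  have hrpos : 0 < rS Y (fun j => 1 / cS Y x j) i :=
    rS_pos hY (fun j => one_div_pos.2 (cS_pos hY hx j)) i
  rw [Fm, Fm, hfun, rS_smul]
  field_simp

lemma Pm_smul {Y : Matrix (Fin N) (Fin N) ℝ} (hY : ∀ i j, 0 < Y i j)
    {x : Fin N → ℝ} (hx : ∀ i, 0 < x i) {c : ℝ} (hc : c ≠ 0) :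
    Pm Y (fun i => c * x i) = Pm Y x := by
  ext i j
  rw [Pm, Pm, Matrix.of_apply, Matrix.of_apply, cS_smul]
  have := (cS_pos hY hx j).ne'
  field_simp

lemma Qm_smul {Y : Matrix (Fin N) (Fin N) ℝ} (hY : ∀ i j, 0 < Y i j)
    {x : Fin N → ℝ} (hx : ∀ i, 0 < x i) {c : ℝ} (hc : c ≠ 0) :
    Qm Y (fun i => c * x i) = Qm Y x := by
  ext i j
  rw [Qm, Qm, Matrix.of_apply, Matrix.of_apply, cS_smul, Fm_smul hY hx hc]
  have := (cS_pos hY hx j).ne'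
  field_simp

lemma colNorm_eq_Pm_one (Y : Matrix (Fin N) (Fin N) ℝ) :
    colNorm Y = Pm Y (fun _ => 1) := by
  ext i j
  rw [colNorm, Pm, Matrix.of_apply, Matrix.of_apply, cS]
  simp

lemma rowNorm_Pm {Y : Matrix (Fin N) (Fin N) ℝ} (hY : ∀ i j, 0 < Y i j)
    {x : Fin N → ℝ} (hx : ∀ i, 0 < x i) :
    rowNorm (Pm Y x) = Qm Y x := by
  ext i j
  have hcs : ∀ j, 0 < cS Y x j := cS_pos hY hx
  have hR : 0 < rS Y (fun j => 1 / cS Y x j) i :=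
    rS_pos hY (fun j => one_div_pos.2 (hcs j)) i
  have hsum : (∑ j', Pm Y x i j') = x i * rS Y (fun j => 1 / cS Y x j) i := by
    rw [rS, Finset.mul_sum]
    congr 1; ext j'
    rw [Pm, Matrix.of_apply]
    field_simp
  rw [rowNorm, Matrix.of_apply, hsum, Qm, Matrix.of_apply, Pm, Matrix.of_apply, Fm]
  have h1 : cS Y x j ≠ 0 := (hcs j).ne'
  have h2 : x i ≠ 0 := (hx i).ne'
  have h3 : rS Y (fun j => 1 / cS Y x j) i ≠ 0 := hR.ne'
  rw [div_div]
  field_simp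

lemma colNorm_Qm {Y : Matrix (Fin N) (Fin N) ℝ} (hY : ∀ i j, 0 < Y i j)
    {x : Fin N → ℝ} (hx : ∀ i, 0 < x i) :
    colNorm (Qm Y x) = Pm Y (Fm Y x) := by
  ext i j
  have hcs : ∀ j, 0 < cS Y x j := cS_pos hY hx
  have hF : ∀ i, 0 < Fm Y x i := Fm_pos hY hx
  have hcsF : ∀ j, 0 < cS Y (Fm Y x) j := cS_pos hY hF
  have hterm : ∀ i' : Fin N, Qm Y x i' j = (Y i' j * Fm Y x i') / cS Y x j := fun i' => by
    rw [Qm, Matrix.of_apply]; ring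
  have hsum : (∑ i', Qm Y x i' j) = cS Y (Fm Y x) j / cS Y x j := by
    rw [Finset.sum_congr rfl (fun i' _ => hterm i'), ← Finset.sum_div]
    rfl
  rw [colNorm, Matrix.of_apply, hsum, Qm, Matrix.of_apply, Pm, Matrix.of_apply]
  have h1 : cS Y x j ≠ 0 := (hcs j).ne'
  have h2 : cS Y (Fm Y x) j ≠ 0 := (hcsF j).ne'
  field_simp

lemma sinkSeq_zero (Y : Matrix (Fin N) (Fin N) ℝ) : sinkSeq Y 0 = Y := rfl

lemma sinkSeq_succ (Y : Matrix (Fin N) (Fin N) ℝ) (k : ℕ) :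
    sinkSeq Y (k + 1) = if k % 2 = 0 then colNorm (sinkSeq Y k) else rowNorm (sinkSeq Y k) :=
  rfl

lemma sinkSeq_formula {Y : Matrix (Fin N) (Fin N) ℝ} (hY : ∀ i j, 0 < Y i j) : ∀ k : ℕ,
    sinkSeq Y (2 * k + 1) = Pm Y (useq Y k) ∧ sinkSeq Y (2 * k + 2) = Qm Y (useq Y k) := by
  intro k
  induction k with
  | zero =>
      have h1 : sinkSeq Y 1 = colNorm Y := by
        rw [show (1 : ℕ) = 0 + 1 from rfl, sinkSeq_succ, if_pos (by norm_num), sinkSeq_zero]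
      have h2 : sinkSeq Y 2 = rowNorm (sinkSeq Y 1) := by
        rw [show (2 : ℕ) = 1 + 1 from rfl, sinkSeq_succ, if_neg (by norm_num)]
      constructor
      · show sinkSeq Y 1 = _
        rw [h1, colNorm_eq_Pm_one]
        rfl
      · show sinkSeq Y 2 = _
        rw [h2, h1, colNorm_eq_Pm_one, rowNorm_Pm hY (fun _ => one_pos)]
        rfl
  | succ k ih =>
      have hpos : ∀ i, 0 < useq Y k i := useq_pos hY k
      have hpos' : ∀ i, 0 < useq Y (k + 1) i := useq_pos hY (k + 1)
      have hP : sinkSeq Y (2 * (k + 1) + 1) = Pm Y (useq Y (k + 1)) := by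
        have harith : 2 * (k + 1) + 1 = (2 * k + 2) + 1 := by ring
        rw [harith, sinkSeq_succ, if_pos (by omega), ih.2, colNorm_Qm hY hpos]
        rfl
      refine ⟨hP, ?_⟩
      have harith : 2 * (k + 1) + 2 = (2 * (k + 1) + 1) + 1 := by ring
      rw [harith, sinkSeq_succ, if_neg (by omega), hP, rowNorm_Pm hY hpos']

lemma tendsto_parity {g : ℕ → ℝ} {L : ℝ}
    (he : Tendsto (fun k => g (2 * k)) atTop (𝓝 L))
    (ho : Tendsto (fun k => g (2 * k + 1)) atTop (𝓝 L)) :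
    Tendsto g atTop (𝓝 L) := by
  rw [Metric.tendsto_atTop] at he ho ⊢
  intro ε hε
  obtain ⟨K1, h1⟩ := he ε hε
  obtain ⟨K2, h2⟩ := ho ε hε
  refine ⟨2 * K1 + 2 * K2 + 2, fun n hn => ?_⟩
  rcases Nat.even_or_odd n with ⟨q, hq⟩ | ⟨q, hq⟩
  · have hq' : n = 2 * q := by omega
    rw [hq']
    exact h1 q (by omega)
  · have hq' : n = 2 * q + 1 := by omega
    rw [hq']
    exact h2 q (by omega)


end SinkhornAux

/-- Convergence part of Sinkhorn's theorem: alternately rescaling columns and rows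
of an entrywise strictly positive matrix converges entrywise to the unique doubly
stochastic matrix of the form `D₁ * Y * D₂` with positive diagonal `D₁`, `D₂`. -/
theorem sinkhorn_iteration_converges (N : ℕ) (hN : 1 ≤ N)
    (Y : Matrix (Fin N) (Fin N) ℝ) (hY : ∀ i j, 0 < Y i j) :
    ∃ d₁ d₂ : Fin N → ℝ, (∀ i, 0 < d₁ i) ∧ (∀ i, 0 < d₂ i) ∧
      IsDoublyStochastic (Matrix.diagonal d₁ * Y * Matrix.diagonal d₂) ∧
      (∀ e₁ e₂ : Fin N → ℝ, (∀ i, 0 < e₁ i) → (∀ i, 0 < e₂ i) →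
        IsDoublyStochastic (Matrix.diagonal e₁ * Y * Matrix.diagonal e₂) →
        Matrix.diagonal e₁ * Y * Matrix.diagonal e₂ =
          Matrix.diagonal d₁ * Y * Matrix.diagonal d₂) ∧
      (∀ i j, Tendsto (fun k => sinkSeq Y k i j) atTop
        (𝓝 ((Matrix.diagonal d₁ * Y * Matrix.diagonal d₂) i j))) := by
  haveI : Nonempty (Fin N) := Fin.pos_iff_nonempty.mp hN
  -- entry formula for diagonal scalings
  have hent : ∀ (a b : Fin N → ℝ) (i j : Fin N),
      (Matrix.diagonal a * Y * Matrix.diagonal b) i j = a i * Y i j * b j := by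
    intro a b i j
    simp [Matrix.mul_diagonal, Matrix.diagonal_mul]
  -- entrywise bounds on Y
  set m : ℝ := Finset.univ.inf' Finset.univ_nonempty (fun p : Fin N × Fin N => Y p.1 p.2)
    with hmdef
  set M : ℝ := Finset.univ.sup' Finset.univ_nonempty (fun p : Fin N × Fin N => Y p.1 p.2)
    with hMdef
  have hlb : ∀ i j, m ≤ Y i j := fun i j =>
    Finset.inf'_le _ (Finset.mem_univ ((i, j) : Fin N × Fin N))
  have hub : ∀ i j, Y i j ≤ M := fun i j =>
    Finset.le_sup' (fun p : Fin N × Fin N => Y p.1 p.2) (Finset.mem_univ ((i, j) : Fin N × Fin N))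
  have hm : 0 < m := by
    rw [hmdef, Finset.lt_inf'_iff]
    exact fun p _ => hY p.1 p.2
  have hM : 0 < M := by
    have i := Classical.arbitrary (Fin N)
    exact lt_of_lt_of_le hm ((hlb i i).trans (hub i i))
  set i0 : Fin N := Classical.arbitrary (Fin N) with hi0
  obtain ⟨w, hwpos, hwconv⟩ := exists_limit Y m M hm hlb hub i0
  set wk : ℕ → Fin N → ℝ := fun k i => useq Y k i / useq Y k i0 with hwkdef
  have hupos : ∀ k i, 0 < useq Y k i := useq_pos hY
  have hwkpos : ∀ k i, 0 < wk k i := fun k i => div_pos (hupos k i) (hupos k i0)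
  have huw : ∀ k, useq Y k = fun i => useq Y k i0 * wk k i := by
    intro k
    funext i
    rw [hwkdef]
    rw [mul_comm (useq Y k i0) (useq Y k i / useq Y k i0), div_mul_eq_mul_div,
      mul_div_assoc, div_self (hupos k i0).ne', mul_one]
  -- continuity facts
  have hcsw_pos : ∀ j, 0 < cS Y w j := cS_pos hY hwpos
  have hcs_tendsto : ∀ j, Tendsto (fun k => cS Y (wk k) j) atTop (𝓝 (cS Y w j)) := by
    intro j
    have : Tendsto (fun k => ∑ i, Y i j * wk k i) atTop (𝓝 (∑ i, Y i j * w i)) :=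
      tendsto_finset_sum _ (fun i _ => (hwconv i).const_mul (Y i j))
    exact this
  have hRw_pos : ∀ i, 0 < rS Y (fun j => 1 / cS Y w j) i :=
    rS_pos hY (fun j => one_div_pos.2 (hcsw_pos j))
  have hFw_pos : ∀ i, 0 < Fm Y w i := Fm_pos hY hwpos
  have hFw_tendsto : ∀ i, Tendsto (fun k => Fm Y (wk k) i) atTop (𝓝 (Fm Y w i)) := by
    intro i
    have h1 : ∀ j, Tendsto (fun k => 1 / cS Y (wk k) j) atTop (𝓝 (1 / cS Y w j)) := fun j =>
      tendsto_const_nhds.div (hcs_tendsto j) (hcsw_pos j).ne'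
    have h2 : Tendsto (fun k => rS Y (fun j => 1 / cS Y (wk k) j) i) atTop
        (𝓝 (rS Y (fun j => 1 / cS Y w j) i)) :=
      tendsto_finset_sum _ (fun j _ => (h1 j).const_mul (Y i j))
    exact tendsto_const_nhds.div h2 (hRw_pos i).ne'
  -- fixed point equation
  have hwk_succ : ∀ k i, wk (k + 1) i = Fm Y (wk k) i / Fm Y (wk k) i0 := by
    intro k i
    have hc : useq Y k i0 ≠ 0 := (hupos k i0).ne'
    have : useq Y (k + 1) = Fm Y (fun i => useq Y k i0 * wk k i) := by
      rw [← huw k]; rfl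
    rw [hwkdef]
    simp only [this, Fm_smul hY (hwkpos k) hc]
    rw [mul_div_mul_left _ _ hc]
  have hfix : ∀ i, w i = Fm Y w i / Fm Y w i0 := by
    intro i
    have hl : Tendsto (fun k => wk (k + 1) i) atTop (𝓝 (w i)) :=
      (hwconv i).comp (tendsto_add_atTop_nat 1)
    have hr : Tendsto (fun k => Fm Y (wk k) i / Fm Y (wk k) i0) atTop
        (𝓝 (Fm Y w i / Fm Y w i0)) :=
      (hFw_tendsto i).div (hFw_tendsto i0) (hFw_pos i0).ne'
    have heq : (fun k => wk (k + 1) i) = fun k => Fm Y (wk k) i / Fm Y (wk k) i0 :=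
      funext fun k => hwk_succ k i
    rw [heq] at hl
    exact tendsto_nhds_unique hl hr
  set c : ℝ := Fm Y w i0 with hcdef
  have hcpos : 0 < c := hFw_pos i0
  have hFweq : ∀ i, Fm Y w i = c * w i := by
    intro i
    rw [hfix i]
    field_simp
  -- the scaled matrix
  set d₂ : Fin N → ℝ := fun j => 1 / cS Y w j with hd₂def
  have hd₂pos : ∀ j, 0 < d₂ j := fun j => one_div_pos.2 (hcsw_pos j)
  have hcol : ∀ j, ∑ i, w i * Y i j * d₂ j = 1 := by
    intro j
    rw [← Finset.sum_mul, hd₂def]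
    have : (∑ i, w i * Y i j) = cS Y w j := by
      rw [cS]; congr 1; ext i; ring
    rw [this]
    rw [mul_one_div]
    exact div_self (hcsw_pos j).ne'
  have hRFw : ∀ i, rS Y (fun j => 1 / cS Y w j) i = 1 / Fm Y w i := by
    intro i
    rw [Fm, one_div_one_div]
  have hrowc : ∀ i, ∑ j, w i * Y i j * d₂ j = 1 / c := by
    intro i
    have h1 : (∑ j, w i * Y i j * d₂ j) = w i * rS Y (fun j => 1 / cS Y w j) i := by
      rw [rS, Finset.mul_sum]
      congr 1; ext j
      rw [hd₂def]
      ring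
    rw [h1, hRFw i, hFweq i]
    rw [mul_one_div, div_eq_div_iff (mul_pos hcpos (hwpos i)).ne' hcpos.ne']
    ring
  have hc1 : c = 1 := by
    have hdouble : (∑ i, ∑ j, w i * Y i j * d₂ j) = ∑ j, ∑ i, w i * Y i j * d₂ j :=
      Finset.sum_comm
    rw [Finset.sum_congr rfl (fun i _ => hrowc i), Finset.sum_congr rfl (fun j _ => hcol j)]
      at hdouble
    simp only [Finset.sum_const, Finset.card_univ, Fintype.card_fin, nsmul_eq_mul,
      mul_one] at hdouble
    have hNpos : (0 : ℝ) < (N : ℝ) := by exact_mod_cast hN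
    rw [mul_one_div, div_eq_iff hcpos.ne'] at hdouble
    have h2 : (N : ℝ) * c = (N : ℝ) * 1 := by linarith
    exact mul_left_cancel₀ hNpos.ne' h2
  have hrow : ∀ i, ∑ j, w i * Y i j * d₂ j = 1 := by
    intro i
    rw [hrowc i, hc1]
    norm_num
  have hFwfix : Fm Y w = w := by
    funext i
    rw [hFweq i, hc1, one_mul]
  -- double stochasticity
  have hDS : IsDoublyStochastic (Matrix.diagonal w * Y * Matrix.diagonal d₂) := by
    refine ⟨fun i j => ?_, fun i => ?_, fun j => ?_⟩
    · rw [hent]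
      exact (mul_pos (mul_pos (hwpos i) (hY i j)) (hd₂pos j)).le
    · rw [Finset.sum_congr rfl (fun j _ => hent w d₂ i j)]
      exact hrow i
    · rw [Finset.sum_congr rfl (fun i _ => hent w d₂ i j)]
      exact hcol j
  refine ⟨w, d₂, hwpos, hd₂pos, hDS, ?_, ?_⟩
  · -- uniqueness
    intro e₁ e₂ he₁ he₂ hDS'
    have hcse : ∀ j, 0 < cS Y e₁ j := cS_pos hY he₁
    have he2eq : ∀ j, e₂ j = 1 / cS Y e₁ j := by
      intro j
      have h := hDS'.2.2 j
      rw [Finset.sum_congr rfl (fun i _ => hent e₁ e₂ i j)] at h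
      rw [← Finset.sum_mul] at h
      have h2 : (∑ i, e₁ i * Y i j) = cS Y e₁ j := by
        rw [cS]; congr 1; ext i; ring
      rw [h2] at h
      exact eq_one_div_of_mul_eq_one_right h
    have he1fix : ∀ i, Fm Y e₁ i = e₁ i := by
      intro i
      have h := hDS'.2.1 i
      rw [Finset.sum_congr rfl (fun j _ => hent e₁ e₂ i j)] at h
      have h2 : (∑ j, e₁ i * Y i j * e₂ j) =
          rS Y (fun j => 1 / cS Y e₁ j) i * e₁ i := by
        rw [rS, Finset.sum_mul]
        congr 1; ext j
        rw [he2eq j]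
        ring
      rw [h2] at h
      rw [Fm]
      exact (eq_one_div_of_mul_eq_one_right h).symm
    have hρ1 : (1 - m / M) * (1 - m / M) < 1 := by
      have h1 : 0 < m / M := div_pos hm hM
      have h2 : m / M ≤ 1 := by
        have i := Classical.arbitrary (Fin N)
        rw [div_le_one hM]; exact (hlb i i).trans (hub i i)
      nlinarith
    have hcontr := dl_Fm Y m M hm hlb hub he₁ hwpos
    rw [show Fm Y e₁ = e₁ from funext he1fix, hFwfix] at hcontr
    have hdlnn := dl_nonneg he₁ hwpos
    have hdl0 : dl e₁ w = 0 := by nlinarith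
    have hmnpos : 0 < mn e₁ w := mn_pos he₁ hwpos
    have hmxmn : mx e₁ w = mn e₁ w := by
      have h' : mx e₁ w / mn e₁ w - 1 = 0 := hdl0
      have h'' : mx e₁ w / mn e₁ w = 1 := by linarith
      rw [div_eq_one_iff_eq hmnpos.ne'] at h''
      exact h''
    have hconst : ∀ i, e₁ i = mn e₁ w * w i := by
      intro i
      have h1 := mn_le e₁ w i
      have h2 := le_mx e₁ w i
      rw [hmxmn] at h2
      have h3 : e₁ i / w i = mn e₁ w := le_antisymm h2 h1
      rw [div_eq_iff (hwpos i).ne'] at h3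
      exact h3
    have he2' : ∀ j, e₂ j = 1 / mn e₁ w * d₂ j := by
      intro j
      have hce : cS Y e₁ j = mn e₁ w * cS Y w j := by
        rw [cS, cS, Finset.mul_sum]
        congr 1; ext i
        rw [hconst i]; ring
      rw [he2eq j, hce, hd₂def]
      field_simp
    ext i j
    rw [hent, hent, hconst i, he2' j]
    field_simp
  · -- convergence
    intro i j
    have hPm_eq : ∀ k, Pm Y (useq Y k) = Pm Y (wk k) := fun k => by
      rw [huw k, Pm_smul hY (hwkpos k) (hupos k i0).ne']
    have hQm_eq : ∀ k, Qm Y (useq Y k) = Qm Y (wk k) := fun k => by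
      rw [huw k, Qm_smul hY (hwkpos k) (hupos k i0).ne']
    have hBij : (Matrix.diagonal w * Y * Matrix.diagonal d₂) i j = w i * Y i j / cS Y w j := by
      rw [hent, hd₂def, mul_one_div]
    rw [hBij]
    apply tendsto_parity (g := fun k => sinkSeq Y k i j)
    · -- even indices
      rw [← tendsto_add_atTop_iff_nat 1]
      have hform : ∀ k : ℕ, sinkSeq Y (2 * (k + 1)) i j = Qm Y (wk k) i j := by
        intro k
        have : 2 * (k + 1) = 2 * k + 2 := by ring
        rw [this, (sinkSeq_formula hY k).2, hQm_eq k]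
      simp only [hform]
      have hlim : Tendsto (fun k => Fm Y (wk k) i * Y i j / cS Y (wk k) j) atTop
          (𝓝 (Fm Y w i * Y i j / cS Y w j)) :=
        ((hFw_tendsto i).mul_const (Y i j)).div (hcs_tendsto j) (hcsw_pos j).ne'
      rw [show Fm Y w i = w i from congrFun hFwfix i] at hlim
      exact hlim
    · -- odd indices
      have hform : ∀ k : ℕ, sinkSeq Y (2 * k + 1) i j = Pm Y (wk k) i j := by
        intro k
        rw [(sinkSeq_formula hY k).1, hPm_eq k]
      simp only [hform]
      exact ((hwconv i).mul_const (Y i j)).div (hcs_tendsto j) (hcsw_pos j).ne'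
end

section
/- Let N ≥ 1, let C be an N×N real matrix, and let β > 0. Then the unique minimizer of S_{β,C}(B) := ⟨C, B⟩_F − (1/β)·H(B) over the set of N×N doubly stochastic matrices has all entries strictly positive. -/
/-- The Frobenius inner product `⟨X, Y⟩_F = Σ_{ij} X_{ij} Y_{ij}`. -/
def frob {N : ℕ} (X Y : Matrix (Fin N) (Fin N) ℝ) : ℝ :=
  ∑ i, ∑ j, X i j * Y i j

/-- The entropy `H(B) = -Σ_{ij} B_{ij} log B_{ij}` (with `0 log 0 = 0`, which is
automatic since `Real.log 0 = 0`). -/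
noncomputable def entH {N : ℕ} (B : Matrix (Fin N) (Fin N) ℝ) : ℝ :=
  -∑ i, ∑ j, B i j * Real.log (B i j)

/-- The entropy-regularized objective `S_{β,C}(B) = ⟨C, B⟩_F - (1/β) H(B)`. -/
noncomputable def Sobj {N : ℕ} (β : ℝ) (C B : Matrix (Fin N) (Fin N) ℝ) : ℝ :=
  frob C B - (1 / β) * entH B

/-- Any minimizer of the entropy-regularized objective `S_{β,C}` over the set of
doubly stochastic matrices has all entries strictly positive. -/
theorem sobj_minimizer_pos (N : ℕ) (hN : 1 ≤ N)
    (C : Matrix (Fin N) (Fin N) ℝ) (β : ℝ) (hβ : 0 < β)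
    (B : Matrix (Fin N) (Fin N) ℝ) (hB : IsDoublyStochastic B)
    (hmin : ∀ B' : Matrix (Fin N) (Fin N) ℝ, IsDoublyStochastic B' →
      Sobj β C B ≤ Sobj β C B') :
    ∀ i j, 0 < B i j := by
  intro i0 j0
  by_contra hlt
  have hb0 : B i0 j0 = 0 := le_antisymm (not_lt.mp hlt) (hB.1 i0 j0)
  set n : ℝ := (N : ℝ) with hn_def
  have hn : 0 < n := by rw [hn_def]; exact_mod_cast Nat.lt_of_lt_of_le Nat.zero_lt_one hN
  set L : ℝ := ∑ i, ∑ j, C i j * (1/n - B i j) with hL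
  set K : ℝ := ∑ i, ∑ j, ((1/n) * Real.log (1/n) - B i j * Real.log (B i j)) with hK
  set R : ℝ := β * n * L + n * K + 1 with hR
  set t : ℝ := min (1/2) (Real.exp (-R)) with ht_def
  have ht0 : 0 < t := lt_min (by norm_num) (Real.exp_pos _)
  have ht1 : t ≤ 1/2 := min_le_left _ _
  have htR : Real.log t ≤ -R := by
    calc Real.log t ≤ Real.log (Real.exp (-R)) :=
          Real.log_le_log ht0 (min_le_right _ _)
      _ = -R := Real.log_exp _
  set B' : Matrix (Fin N) (Fin N) ℝ := Matrix.of fun i j => (1-t) * B i j + t * (1/n)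
    with hB'
  have hB'e : ∀ i j, B' i j = (1-t) * B i j + t * (1/n) := fun i j => rfl
  have hDS' : IsDoublyStochastic B' := by
    refine ⟨fun i j => ?_, fun i => ?_, fun j => ?_⟩
    · have := hB.1 i j
      have h1 : (0:ℝ) ≤ 1 - t := by linarith
      have := mul_nonneg h1 (hB.1 i j)
      have h2 : 0 ≤ t * (1/n) := by positivity
      rw [hB'e]; linarith
    · rw [Finset.sum_congr rfl (fun j _ => hB'e i j), Finset.sum_add_distrib,
        ← Finset.mul_sum, hB.2.1 i]
      simp [Finset.card_univ, ← hn_def]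
      field_simp
      ring
    · rw [Finset.sum_congr rfl (fun i _ => hB'e i j), Finset.sum_add_distrib,
        ← Finset.mul_sum, hB.2.2 j]
      simp [Finset.card_univ, ← hn_def]
      field_simp
      ring
  -- frobenius part
  have hfrob : frob C B' = frob C B + t * L := by
    rw [frob, frob, hL, Finset.mul_sum]
    rw [← Finset.sum_add_distrib]
    refine Finset.sum_congr rfl fun i _ => ?_
    rw [Finset.mul_sum, ← Finset.sum_add_distrib]
    refine Finset.sum_congr rfl fun j _ => ?_
    rw [hB'e]; ring
  -- entropy part, termwise
  have hconv := Real.convexOn_mul_log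
  have hent : ∀ i j, B' i j * Real.log (B' i j) ≤
      B i j * Real.log (B i j) + t * ((1/n) * Real.log (1/n) - B i j * Real.log (B i j))
      + (if i = i0 ∧ j = j0 then (t/n) * Real.log t else 0) := by
    intro i j
    by_cases hij : i = i0 ∧ j = j0
    · rw [if_pos hij]
      obtain ⟨rfl, rfl⟩ := hij
      rw [hB'e, hb0]
      rw [show ((1-t) * (0:ℝ) + t * (1/n)) = t * (1/n) by ring,
        Real.log_mul (ne_of_gt ht0) (by positivity : (1/n : ℝ) ≠ 0)]
      exact le_of_eq (by ring)
    · rw [if_neg hij, add_zero]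
      have h1 : (1 - t) * B i j + t * (1/n) = (1-t) • (B i j) + t • (1/n) := by
        simp [smul_eq_mul]
      have hc := hconv.2 (Set.mem_Ici.mpr (hB.1 i j)) (Set.mem_Ici.mpr (by positivity :
          (0:ℝ) ≤ 1/n)) (by linarith : (0:ℝ) ≤ 1 - t) (le_of_lt ht0) (by ring)
      rw [hB'e]
      simp only [smul_eq_mul] at hc
      calc ((1-t) * B i j + t * (1/n)) * Real.log ((1-t) * B i j + t * (1/n))
          ≤ (1-t) * (B i j * Real.log (B i j)) + t * ((1/n) * Real.log (1/n)) := hc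
        _ = B i j * Real.log (B i j) + t * ((1/n) * Real.log (1/n) - B i j * Real.log (B i j)) := by ring
  have hif : ∑ i, ∑ j, (if i = i0 ∧ j = j0 then (t/n) * Real.log t else 0)
      = (t/n) * Real.log t := by
    rw [Finset.sum_eq_single i0]
    · rw [Finset.sum_eq_single j0]
      · simp
      · intro b _ hb; simp [hb]
      · simp
    · intro a _ ha
      simp [ha]
    · simp
  have hentsum : (∑ i, ∑ j, B' i j * Real.log (B' i j)) ≤
      (∑ i, ∑ j, B i j * Real.log (B i j)) + t * K + (t/n) * Real.log t := by
    have h1 : (∑ i, ∑ j, B' i j * Real.log (B' i j)) ≤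
        ∑ i, ∑ j, (B i j * Real.log (B i j)
          + t * ((1/n) * Real.log (1/n) - B i j * Real.log (B i j))
          + (if i = i0 ∧ j = j0 then (t/n) * Real.log t else 0)) := by
      refine Finset.sum_le_sum fun i _ => Finset.sum_le_sum fun j _ => hent i j
    calc (∑ i, ∑ j, B' i j * Real.log (B' i j)) ≤ _ := h1
      _ = (∑ i, ∑ j, B i j * Real.log (B i j)) + t * K + (t/n) * Real.log t := by
          rw [hK, Finset.mul_sum]
          simp only [Finset.sum_add_distrib, Finset.mul_sum]
          rw [hif]
    -- done
  have hSobj : ∀ M : Matrix (Fin N) (Fin N) ℝ,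
      Sobj β C M = frob C M + (1/β) * ∑ i, ∑ j, M i j * Real.log (M i j) := by
    intro M; rw [Sobj, entH]; ring
  have hβinv : 0 < 1/β := by positivity
  have hkey : Sobj β C B' ≤ Sobj β C B + t * L + (1/β) * (t * K + (t/n) * Real.log t) := by
    rw [hSobj, hSobj, hfrob]
    have := mul_le_mul_of_nonneg_left hentsum (le_of_lt hβinv)
    nlinarith [this]
  have hlogbound : (t/n) * Real.log t ≤ (t/n) * (-R) := by
    apply mul_le_mul_of_nonneg_left htR (by positivity)
  have hfinal : Sobj β C B' < Sobj β C B := by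
    have h2 : (1/β) * ((t/n) * Real.log t) ≤ (1/β) * ((t/n) * (-R)) :=
      mul_le_mul_of_nonneg_left hlogbound (le_of_lt hβinv)
    have hexp : (1/β) * ((t/n) * (-R)) = -(t * L) - (1/β) * (t * K) - t/(β * n) := by
      rw [hR]; field_simp; ring
    have hpos : 0 < t/(β*n) := by positivity
    calc Sobj β C B' ≤ Sobj β C B + t * L + (1/β) * (t * K + (t/n) * Real.log t) := hkey
      _ = Sobj β C B + t * L + (1/β) * (t * K) + (1/β) * ((t/n) * Real.log t) := by ring
      _ ≤ Sobj β C B + t * L + (1/β) * (t * K) + (1/β) * ((t/n) * (-R)) := by linarith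
      _ = Sobj β C B - t/(β*n) := by rw [hexp]; ring
      _ < Sobj β C B := by linarith
  exact absurd (hmin B' hDS') (not_le.mpr hfinal)
end

section
/- Let N ≥ 1, let C be an N×N real matrix, and let β > 0. Let B̂ be the unique minimizer of S_{β,C}(B) := ⟨C, B⟩_F − (1/β)·H(B) over the set of N×N doubly stochastic matrices. Then there exist diagonal N×N matrices D₁ and D₂ with strictly positive diagonal entries such that B̂ = D₁ · exp(−βC) · D₂, where exp(−βC) denotes the matrix with entries e^{−β C_{ij}}. Equivalently, B̂ is the unique doubly stochastic diagonal scaling of the entrywise positive matrix exp(−βC). -/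
noncomputable def psi (x : ℝ) : ℝ := x * Real.log x

lemma psi_grad {x y : ℝ} (hx : 0 ≤ x) (hy : 0 < y) :
    psi y + (x - y) * (Real.log y + 1) ≤ psi x := by
  rcases eq_or_lt_of_le hx with h | h
  · subst h
    simp [psi]
    nlinarith [hy, Real.log_le_sub_one_of_pos hy]
  · have hlog : Real.log (y / x) ≤ y / x - 1 := Real.log_le_sub_one_of_pos (by positivity)
    have hld : Real.log (y / x) = Real.log y - Real.log x := Real.log_div (ne_of_gt hy) (ne_of_gt h)
    unfold psi
    have h2 : x * Real.log (y/x) ≤ x * (y/x - 1) := by nlinarith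
    have h3 : x * (y/x) = y := by field_simp
    nlinarith [h2, hld]

def pertQ {N : ℕ} (i i' j j' : Fin N) (p q : Fin N) : ℝ :=
  (if p = i ∧ q = j then 1 else 0) + (if p = i' ∧ q = j' then 1 else 0)
  - (if p = i ∧ q = j' then 1 else 0) - (if p = i' ∧ q = j then 1 else 0)

noncomputable def pert {N : ℕ} (B : Matrix (Fin N) (Fin N) ℝ) (i i' j j' : Fin N) (t : ℝ) :
    Matrix (Fin N) (Fin N) ℝ :=
  Matrix.of fun p q => B p q + t * pertQ i i' j j' p q

lemma sum_eq_four {N : ℕ} {i i' j j' : Fin N} (hi : i ≠ i') (hj : j ≠ j')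
    (H : Fin N → Fin N → ℝ)
    (hH : ∀ p q, ¬(p = i ∧ q = j) → ¬(p = i' ∧ q = j') → ¬(p = i ∧ q = j') →
      ¬(p = i' ∧ q = j) → H p q = 0) :
    ∑ p, ∑ q, H p q = H i j + H i' j' + H i j' + H i' j := by
  rw [← Finset.sum_product']
  have hsub : ∑ x ∈ ({(i,j),(i',j'),(i,j'),(i',j)} : Finset (Fin N × Fin N)), H x.1 x.2
      = ∑ x ∈ Finset.univ ×ˢ Finset.univ, H x.1 x.2 := by
    apply Finset.sum_subset (Finset.subset_univ _ |>.trans (by simp))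
    intro x _ hx
    simp only [Finset.mem_insert, Finset.mem_singleton] at hx
    push_neg at hx
    obtain ⟨h1, h2, h3, h4⟩ := hx
    refine hH x.1 x.2 ?_ ?_ ?_ ?_ <;>
      · rintro ⟨ha, hb⟩
        first
        | exact h1 (Prod.ext ha hb)
        | exact h2 (Prod.ext ha hb)
        | exact h3 (Prod.ext ha hb)
        | exact h4 (Prod.ext ha hb)
  rw [← hsub]
  have d12 : ((i,j) : Fin N × Fin N) ≠ (i',j') := by simp [hi]
  have d13 : ((i,j) : Fin N × Fin N) ≠ (i,j') := by simp [hj]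
  have d14 : ((i,j) : Fin N × Fin N) ≠ (i',j) := by simp [hi]
  have d23 : ((i',j') : Fin N × Fin N) ≠ (i,j') := by simp [hi.symm]
  have d24 : ((i',j') : Fin N × Fin N) ≠ (i',j) := by simp [hj.symm]
  have d34 : ((i,j') : Fin N × Fin N) ≠ (i',j) := by simp [hi]
  rw [Finset.sum_insert (by simp [d12, d13, d14]),
      Finset.sum_insert (by simp [d23, d24]),
      Finset.sum_insert (by simp [d34]), Finset.sum_singleton]
  ring
lemma pertQ_row {N : ℕ} (i i' j j' p : Fin N) :
    ∑ q, pertQ i i' j j' p q = 0 := by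
  simp [pertQ, Finset.sum_add_distrib, Finset.sum_sub_distrib, ite_and, Finset.sum_ite_eq']

lemma pertQ_col {N : ℕ} (i i' j j' q : Fin N) :
    ∑ p, pertQ i i' j j' p q = 0 := by
  simp [pertQ, Finset.sum_add_distrib, Finset.sum_sub_distrib, ite_and, Finset.sum_ite_eq']

lemma pertQ_vals {N : ℕ} {i i' j j' : Fin N} (hi : i ≠ i') (hj : j ≠ j') :
    pertQ i i' j j' i j = 1 ∧ pertQ i i' j j' i' j' = 1 ∧
    pertQ i i' j j' i j' = -1 ∧ pertQ i i' j j' i' j = -1 := by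
  simp [pertQ, hi, hj, hi.symm, hj.symm]

lemma pert_apply_of_ne {N : ℕ} {B : Matrix (Fin N) (Fin N) ℝ} {i i' j j' p q : Fin N} {t : ℝ}
    (h1 : ¬(p = i ∧ q = j)) (h2 : ¬(p = i' ∧ q = j')) (h3 : ¬(p = i ∧ q = j'))
    (h4 : ¬(p = i' ∧ q = j)) : pert B i i' j j' t p q = B p q := by
  simp [pert, pertQ, h1, h2, h3, h4]

lemma pert_DS {N : ℕ} {B : Matrix (Fin N) (Fin N) ℝ} (hB : IsDoublyStochastic B)
    {i i' j j' : Fin N} (hi : i ≠ i') (hj : j ≠ j') {t : ℝ}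
    (h1 : 0 ≤ B i j + t) (h2 : 0 ≤ B i' j' + t) (h3 : t ≤ B i j') (h4 : t ≤ B i' j) :
    IsDoublyStochastic (pert B i i' j j' t) := by
  obtain ⟨hnn, hrow, hcol⟩ := hB
  refine ⟨?_, ?_, ?_⟩
  · intro p q
    by_cases e1 : p = i ∧ q = j
    · obtain ⟨rfl, rfl⟩ := e1; simp [pert, (pertQ_vals hi hj).1]; linarith
    · by_cases e2 : p = i' ∧ q = j'
      · obtain ⟨rfl, rfl⟩ := e2; simp [pert, (pertQ_vals hi hj).2.1]; linarith
      · by_cases e3 : p = i ∧ q = j'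
        · obtain ⟨rfl, rfl⟩ := e3; simp [pert, (pertQ_vals hi hj).2.2.1]; linarith
        · by_cases e4 : p = i' ∧ q = j
          · obtain ⟨rfl, rfl⟩ := e4; simp [pert, (pertQ_vals hi hj).2.2.2]; linarith
          · rw [pert_apply_of_ne e1 e2 e3 e4]; exact hnn p q
  · intro p
    have : ∑ q, pert B i i' j j' t p q = (∑ q, B p q) + t * ∑ q, pertQ i i' j j' p q := by
      simp [pert, Finset.sum_add_distrib, Finset.mul_sum]
    rw [this, pertQ_row, hrow]; ring
  · intro q
    have : ∑ p, pert B i i' j j' t p q = (∑ p, B p q) + t * ∑ p, pertQ i i' j j' p q := by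
      simp [pert, Finset.sum_add_distrib, Finset.mul_sum]
    rw [this, pertQ_col, hcol]; ring

lemma Sobj_eq {N : ℕ} (β : ℝ) (C B : Matrix (Fin N) (Fin N) ℝ) :
    Sobj β C B = ∑ p, ∑ q, (C p q * B p q + (1/β) * psi (B p q)) := by
  unfold Sobj frob entH psi
  rw [mul_neg, sub_neg_eq_add, Finset.mul_sum, ← Finset.sum_add_distrib]
  refine Finset.sum_congr rfl fun p _ => ?_
  rw [Finset.mul_sum, ← Finset.sum_add_distrib]

lemma Sobj_pert {N : ℕ} (β : ℝ) (C B : Matrix (Fin N) (Fin N) ℝ)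
    {i i' j j' : Fin N} (hi : i ≠ i') (hj : j ≠ j') (t : ℝ) :
    Sobj β C (pert B i i' j j' t) = Sobj β C B
      + t * (C i j + C i' j' - C i j' - C i' j)
      + (1/β) * (psi (B i j + t) + psi (B i' j' + t) + psi (B i j' - t) + psi (B i' j - t)
          - psi (B i j) - psi (B i' j') - psi (B i j') - psi (B i' j)) := by
  obtain ⟨v1, v2, v3, v4⟩ := pertQ_vals hi hj
  have key : ∑ p, ∑ q, ((C p q * pert B i i' j j' t p q + (1/β) * psi (pert B i i' j j' t p q))
       - (C p q * B p q + (1/β) * psi (B p q)))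
      = (C i j * (B i j + t) + (1/β) * psi (B i j + t) - (C i j * B i j + (1/β) * psi (B i j)))
      + (C i' j' * (B i' j' + t) + (1/β) * psi (B i' j' + t) - (C i' j' * B i' j' + (1/β) * psi (B i' j')))
      + (C i j' * (B i j' - t) + (1/β) * psi (B i j' - t) - (C i j' * B i j' + (1/β) * psi (B i j')))
      + (C i' j * (B i' j - t) + (1/β) * psi (B i' j - t) - (C i' j * B i' j + (1/β) * psi (B i' j))) := by
    have := sum_eq_four hi hj
      (fun p q => (C p q * pert B i i' j j' t p q + (1/β) * psi (pert B i i' j j' t p q))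
        - (C p q * B p q + (1/β) * psi (B p q)))
      (fun p q e1 e2 e3 e4 => by rw [pert_apply_of_ne e1 e2 e3 e4]; ring)
    rw [this]
    have p1 : pert B i i' j j' t i j = B i j + t := by simp [pert, v1]
    have p2 : pert B i i' j j' t i' j' = B i' j' + t := by simp [pert, v2]
    have p3 : pert B i i' j j' t i j' = B i j' - t := by simp [pert, v3]; ring
    have p4 : pert B i i' j j' t i' j = B i' j - t := by simp [pert, v4]; ring
    rw [p1, p2, p3, p4]
  rw [Sobj_eq β C (pert B i i' j j' t), Sobj_eq β C B] at *
  have expand : ∑ p, ∑ q, ((C p q * pert B i i' j j' t p q + (1/β) * psi (pert B i i' j j' t p q))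
       - (C p q * B p q + (1/β) * psi (B p q)))
      = (∑ p, ∑ q, (C p q * pert B i i' j j' t p q + (1/β) * psi (pert B i i' j j' t p q)))
      - ∑ p, ∑ q, (C p q * B p q + (1/β) * psi (B p q)) := by
    rw [← Finset.sum_sub_distrib]
    exact Finset.sum_congr rfl fun p _ => by rw [← Finset.sum_sub_distrib]
  rw [expand] at key
  linarith [key]
lemma entry_le_one {N : ℕ} {B : Matrix (Fin N) (Fin N) ℝ} (hB : IsDoublyStochastic B)
    (p q : Fin N) : B p q ≤ 1 := by
  obtain ⟨hnn, hrow, _⟩ := hB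
  have h := hrow p
  have : B p q ≤ ∑ r, B p r :=
    Finset.single_le_sum (fun r _ => hnn p r) (Finset.mem_univ q)
  linarith

set_option maxHeartbeats 1600000 in
lemma minimizer_pos {N : ℕ} (C : Matrix (Fin N) (Fin N) ℝ) {β : ℝ} (hβ : 0 < β)
    (Bhat : Matrix (Fin N) (Fin N) ℝ) (hB : IsDoublyStochastic Bhat)
    (hmin : ∀ B' : Matrix (Fin N) (Fin N) ℝ, IsDoublyStochastic B' →
      Sobj β C Bhat ≤ Sobj β C B') :
    ∀ i j, 0 < Bhat i j := by
  intro i j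
  rcases lt_or_eq_of_le (hB.1 i j) with h | h
  · exact h
  exfalso
  have ha : Bhat i j = 0 := h.symm
  -- find j' with positive entry in row i
  have hrow : ∃ q, 0 < Bhat i q := by
    by_contra hcon
    push_neg at hcon
    have hz : ∑ q, Bhat i q = 0 :=
      Finset.sum_eq_zero fun q _ => le_antisymm (hcon q) (hB.1 i q)
    rw [hB.2.1 i] at hz; norm_num at hz
  obtain ⟨j', hb⟩ := hrow
  have hjj' : j ≠ j' := fun e => by rw [← e, ha] at hb; exact lt_irrefl 0 hb
  have hcol : ∃ p, 0 < Bhat p j := by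
    by_contra hcon
    push_neg at hcon
    have hz : ∑ p, Bhat p j = 0 :=
      Finset.sum_eq_zero fun p _ => le_antisymm (hcon p) (hB.1 p j)
    rw [hB.2.2 j] at hz; norm_num at hz
  obtain ⟨i', hc⟩ := hcol
  have hii' : i ≠ i' := fun e => by rw [← e, ha] at hc; exact lt_irrefl 0 hc
  set b := Bhat i j' with hbdef
  set c := Bhat i' j with hcdef
  set d := Bhat i' j' with hddef
  have hd0 : 0 ≤ d := hB.1 i' j'
  have hd1 : d ≤ 1 := entry_le_one hB i' j'
  set L := C i j + C i' j' - C i j' - C i' j with hLdef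
  set M := -Real.log (b/2) - Real.log (c/2) with hMdef
  set t := min (min (b/2) (c/2)) (min 1 (Real.exp (-β*(L+1) - M - 2))) with htdef
  have ht0 : 0 < t := by
    apply lt_min (lt_min (by linarith) (by linarith))
    exact lt_min one_pos (Real.exp_pos _)
  have htb : t ≤ b/2 := le_trans (min_le_left _ _) (min_le_left _ _)
  have htc : t ≤ c/2 := le_trans (min_le_left _ _) (min_le_right _ _)
  have ht1 : t ≤ 1 := le_trans (min_le_right _ _) (min_le_left _ _)
  have hte : t ≤ Real.exp (-β*(L+1) - M - 2) := le_trans (min_le_right _ _) (min_le_right _ _)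
  have hlogt : Real.log t ≤ -β*(L+1) - M - 2 := by
    calc Real.log t ≤ Real.log (Real.exp (-β*(L+1) - M - 2)) := Real.log_le_log ht0 hte
    _ = -β*(L+1) - M - 2 := Real.log_exp _
  -- the perturbed matrix is doubly stochastic
  have hDS : IsDoublyStochastic (pert Bhat i i' j j' t) :=
    pert_DS hB hii' hjj' (by rw [ha]; linarith) (by linarith) (by linarith) (by linarith)
  have hge := hmin _ hDS
  rw [Sobj_pert β C Bhat hii' hjj' t] at hge
  -- bounds on the psi differences
  have hbd1 : psi (Bhat i j + t) = t * Real.log t := by rw [ha, zero_add]; rfl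
  have hpsi0 : psi (Bhat i j) = 0 := by rw [ha]; simp [psi]
  have hbd2 : psi (d + t) - psi d ≤ 2 * t := by
    have hstep : psi (d + t) - psi d ≤ t * (Real.log (d + t) + 1) := by
      rcases eq_or_lt_of_le hd0 with e | e
      · rw [← e, zero_add]
        simp only [psi, Real.log_zero, mul_zero, zero_mul, sub_zero]
        nlinarith [ht0]
      · have hg := psi_grad (x := d) (y := d + t) (le_of_lt e) (by linarith)
        nlinarith [hg]
    have hlog2 : Real.log (d + t) ≤ 1 := by
      have := Real.log_le_sub_one_of_pos (show (0:ℝ) < d + t by linarith)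
      linarith
    have hm2 : t * Real.log (d + t) ≤ t * 1 := mul_le_mul_of_nonneg_left hlog2 ht0.le
    linarith [hstep, hm2]
  have hbd3 : psi (b - t) - psi b ≤ t * (-Real.log (b/2) - 1) := by
    have hbt : (0:ℝ) < b - t := by linarith
    have hg := psi_grad (x := b) (y := b - t) (by linarith) hbt
    have hmono : Real.log (b/2) ≤ Real.log (b - t) := Real.log_le_log (by linarith) (by linarith)
    have hm2 : t * Real.log (b/2) ≤ t * Real.log (b - t) := mul_le_mul_of_nonneg_left hmono ht0.le
    nlinarith [hg, hm2]
  have hbd4 : psi (c - t) - psi c ≤ t * (-Real.log (c/2) - 1) := by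
    have hct : (0:ℝ) < c - t := by linarith
    have hg := psi_grad (x := c) (y := c - t) (by linarith) hct
    have hmono : Real.log (c/2) ≤ Real.log (c - t) := Real.log_le_log (by linarith) (by linarith)
    have hm2 : t * Real.log (c/2) ≤ t * Real.log (c - t) := mul_le_mul_of_nonneg_left hmono ht0.le
    nlinarith [hg, hm2]
  -- combine
  have hsum : psi (Bhat i j + t) + psi (d + t) + psi (b - t) + psi (c - t)
      - psi (Bhat i j) - psi d - psi b - psi c ≤ t * (Real.log t + M) + 2*t := by
    rw [hbd1, hpsi0, hMdef]
    nlinarith [hbd2, hbd3, hbd4]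
  have hneg : t * L + (1/β) * (t * (Real.log t + M) + 2*t) < 0 := by
    have h0 : t * Real.log t ≤ t * (-β*(L+1) - M - 2) :=
      mul_le_mul_of_nonneg_left hlogt ht0.le
    have h1 : t * (Real.log t + M) + 2*t ≤ t * (-β*(L+1)) := by nlinarith [h0]
    have h2 : (1/β) * (t * (Real.log t + M) + 2*t) ≤ (1/β) * (t * (-β*(L+1))) :=
      mul_le_mul_of_nonneg_left h1 (by positivity)
    have h3 : (1/β) * (t * (-β*(L+1))) = -t*(L+1) := by
      field_simp
    nlinarith [h2, h3, ht0]
  have hfinal : Sobj β C Bhat ≤ Sobj β C Bhat + (t * L + (1/β) * (t * (Real.log t + M) + 2*t)) := by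
    have hmul : (1/β) * (psi (Bhat i j + t) + psi (d + t) + psi (b - t) + psi (c - t)
        - psi (Bhat i j) - psi d - psi b - psi c) ≤ (1/β) * (t * (Real.log t + M) + 2*t) :=
      mul_le_mul_of_nonneg_left hsum (by positivity)
    linarith [hge, hmul]
  linarith
lemma pert_zero {N : ℕ} (B : Matrix (Fin N) (Fin N) ℝ) (i i' j j' : Fin N) :
    pert B i i' j j' 0 = B := by
  ext p q; simp [pert]

lemma psi_hasDerivAt_add {a : ℝ} (ha : 0 < a) :
    HasDerivAt (fun t : ℝ => psi (a + t)) (Real.log a + 1) 0 := by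
  have inner : HasDerivAt (fun t : ℝ => a + t) 1 0 := by
    simpa using (hasDerivAt_id (0:ℝ)).const_add a
  have h := (Real.hasDerivAt_mul_log (x := a + 0) (by simp [ne_of_gt ha])).comp 0 inner
  simp only [psi]
  simpa [Function.comp_def] using h

lemma psi_hasDerivAt_sub {b : ℝ} (hb : 0 < b) :
    HasDerivAt (fun t : ℝ => psi (b - t)) (-(Real.log b + 1)) 0 := by
  have inner : HasDerivAt (fun t : ℝ => b - t) (-1) 0 := by
    simpa using (hasDerivAt_id (0:ℝ)).const_sub b
  have h := (Real.hasDerivAt_mul_log (x := b - 0) (by simp [ne_of_gt hb])).comp 0 inner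
  simp only [psi]
  simpa [Function.comp_def] using h

lemma quadrangle {N : ℕ} (C : Matrix (Fin N) (Fin N) ℝ) {β : ℝ} (hβ : 0 < β)
    (Bhat : Matrix (Fin N) (Fin N) ℝ) (hB : IsDoublyStochastic Bhat)
    (hmin : ∀ B' : Matrix (Fin N) (Fin N) ℝ, IsDoublyStochastic B' →
      Sobj β C Bhat ≤ Sobj β C B')
    (hpos : ∀ p q, 0 < Bhat p q)
    {i i' j j' : Fin N} (hi : i ≠ i') (hj : j ≠ j') :
    β * C i j + Real.log (Bhat i j) + (β * C i' j' + Real.log (Bhat i' j'))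
      = β * C i j' + Real.log (Bhat i j') + (β * C i' j + Real.log (Bhat i' j)) := by
  set a := Bhat i j with hadef
  set d := Bhat i' j' with hddef
  set b := Bhat i j' with hbdef
  set c := Bhat i' j with hcdef
  have ha : 0 < a := hpos i j
  have hd : 0 < d := hpos i' j'
  have hbp : 0 < b := hpos i j'
  have hcp : 0 < c := hpos i' j
  set L := C i j + C i' j' - C i j' - C i' j with hLdef
  set G : ℝ → ℝ := fun t => Sobj β C Bhat + t * L
    + (1/β) * (psi (a + t) + psi (d + t) + psi (b - t) + psi (c - t)
        - psi a - psi d - psi b - psi c) with hGdef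
  have hG : ∀ t, G t = Sobj β C (pert Bhat i i' j j' t) := fun t =>
    (Sobj_pert β C Bhat hi hj t).symm
  have hε : (0:ℝ) < min (min a d) (min b c) := by positivity
  have hlm : IsLocalMin G 0 := by
    have h0 : G 0 = Sobj β C Bhat := by rw [hG 0, pert_zero]
    unfold IsLocalMin IsMinFilter
    filter_upwards [Metric.ball_mem_nhds (0:ℝ) hε] with t ht
    rw [Real.ball_eq_Ioo] at ht
    obtain ⟨ht1, ht2⟩ := ht
    simp only [zero_sub, zero_add] at ht1 ht2
    have hta : -(min (min a d) (min b c)) < t := ht1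
    have h1 : 0 ≤ a + t := by
      have := min_le_left (min a d) (min b c); have := min_le_left a d; nlinarith [hta]
    have h2 : 0 ≤ d + t := by
      have := min_le_left (min a d) (min b c); have := min_le_right a d; nlinarith [hta]
    have h3 : t ≤ b := by
      have h5 := min_le_right (min a d) (min b c); have h6 := min_le_left b c; linarith
    have h4 : t ≤ c := by
      have h5 := min_le_right (min a d) (min b c); have h6 := min_le_right b c; linarith
    rw [h0, hG t]
    exact hmin _ (pert_DS hB hi hj h1 h2 h3 h4)
  set D : ℝ := L + (1/β) * ((Real.log a + 1) + (Real.log d + 1)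
      + -(Real.log b + 1) + -(Real.log c + 1)) with hDdef
  have hDG : HasDerivAt G D 0 := by
    have H1 := psi_hasDerivAt_add ha
    have H2 := psi_hasDerivAt_add hd
    have H3 := psi_hasDerivAt_sub hbp
    have H4 := psi_hasDerivAt_sub hcp
    have Hsum := ((((((H1.add H2).add H3).add H4).sub_const (psi a)).sub_const
      (psi d)).sub_const (psi b)).sub_const (psi c)
    have Hlin : HasDerivAt (fun t : ℝ => Sobj β C Bhat + t * L) L 0 :=
      (hasDerivAt_mul_const L).const_add _
    have := Hlin.add (Hsum.const_mul (1/β))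
    rw [hDdef]
    convert this using 2
    try ring
    all_goals rfl
  have hD0 : D = 0 := hlm.hasDerivAt_eq_zero hDG
  rw [hDdef] at hD0
  have hβ' : β ≠ 0 := ne_of_gt hβ
  have : β * L + (Real.log a + Real.log d - Real.log b - Real.log c) = 0 := by
    have := congrArg (fun x => β * x) hD0
    simp only [mul_zero] at this
    field_simp at this
    linarith [this]
  rw [hLdef] at this
  linarith [this]
/-- Theorem 2 of the paper: the minimizer of the entropy-regularized Frobenius
inner product over doubly stochastic matrices is the doubly stochastic diagonal
scaling of the entrywise positive matrix `exp(-βC)`. -/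
theorem sobj_minimizer_is_sinkhorn_scaling (N : ℕ) (hN : 1 ≤ N)
    (C : Matrix (Fin N) (Fin N) ℝ) (β : ℝ) (hβ : 0 < β)
    (Bhat : Matrix (Fin N) (Fin N) ℝ) (hB : IsDoublyStochastic Bhat)
    (hmin : ∀ B' : Matrix (Fin N) (Fin N) ℝ, IsDoublyStochastic B' →
      Sobj β C Bhat ≤ Sobj β C B') :
    ∃ d₁ d₂ : Fin N → ℝ, (∀ i, 0 < d₁ i) ∧ (∀ i, 0 < d₂ i) ∧
      Bhat = Matrix.diagonal d₁ *
        (Matrix.of fun i j => Real.exp (-β * C i j)) * Matrix.diagonal d₂ := by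
  have hpos := minimizer_pos C hβ Bhat hB hmin
  have hquad : ∀ p q p' q', β * C p q + Real.log (Bhat p q)
      + (β * C p' q' + Real.log (Bhat p' q'))
      = β * C p q' + Real.log (Bhat p q') + (β * C p' q + Real.log (Bhat p' q)) := by
    intro p q p' q'
    by_cases hp : p = p'
    · subst hp; ring
    by_cases hq : q = q'
    · subst hq; ring
    exact quadrangle C hβ Bhat hB hmin hpos hp hq
  set i0 : Fin N := ⟨0, hN⟩ with hi0
  refine ⟨fun p => Real.exp (β * C p i0 + Real.log (Bhat p i0)
      - (β * C i0 i0 + Real.log (Bhat i0 i0))),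
    fun q => Real.exp (β * C i0 q + Real.log (Bhat i0 q)),
    fun p => Real.exp_pos _, fun q => Real.exp_pos _, ?_⟩
  ext p q
  rw [Matrix.mul_diagonal, Matrix.diagonal_mul, Matrix.of_apply]
  rw [← Real.exp_add, ← Real.exp_add]
  have hkey := hquad p q i0 i0
  calc Bhat p q = Real.exp (Real.log (Bhat p q)) := (Real.exp_log (hpos p q)).symm
    _ = _ := by apply congrArg; linarith [hkey]
end

section
/- Let N ≥ 1, let C be an N×N real matrix, and let β > 0. Let m(β) denote the minimum of S_{β,C}(B) := ⟨C, B⟩_F − (1/β)·H(B) over all N×N doubly stochastic matrices B, and let m* denote the minimum of ⟨C, P⟩_F over all N×N permutation matrices P. Then 0 ≤ m* − m(β) ≤ (N · log N)/β; in particular, m(β) → m* as β → ∞. -/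
open Filter Topology

/-- The permutation matrix of `σ`: `P_{ij} = 1` if `j = σ i`, else `0`. -/
def permMat {N : ℕ} (σ : Equiv.Perm (Fin N)) : Matrix (Fin N) (Fin N) ℝ :=
  Matrix.of fun i j => if σ i = j then 1 else 0

/-- A matrix is a permutation matrix if it arises from some permutation. -/
def IsPermMatrix {N : ℕ} (P : Matrix (Fin N) (Fin N) ℝ) : Prop :=
  ∃ σ : Equiv.Perm (Fin N), P = permMat σ

lemma row_ent (N : ℕ) (hN : 1 ≤ N) (p : Fin N → ℝ) (h0 : ∀ j, 0 ≤ p j)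
    (h1 : ∑ j, p j = 1) : -∑ j, p j * Real.log (p j) ≤ Real.log N := by
  have hNpos : (0:ℝ) < N := by exact_mod_cast hN
  have jensen := Real.concaveOn_negMulLog.le_map_sum
    (t := Finset.univ) (w := fun _ : Fin N => 1 / (N:ℝ)) (p := fun j => (N:ℝ) * p j)
    (by intro i _; positivity) (by simp [Finset.sum_const]; field_simp)
    (by intro i _; have := h0 i; simp; positivity)
  have hsum : ∑ j, (1 / (N:ℝ)) • ((N:ℝ) * p j) = 1 := by
    simp only [smul_eq_mul]
    rw [← Finset.mul_sum, ← Finset.mul_sum, h1]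
    field_simp
  rw [hsum, Real.negMulLog_one] at jensen
  have expand : ∀ j, (1 / (N:ℝ)) • Real.negMulLog ((N:ℝ) * p j)
      = -(p j * Real.log N) - p j * Real.log (p j) := by
    intro j
    rcases eq_or_lt_of_le (h0 j) with h | h
    · simp [← h, Real.negMulLog]
    · rw [Real.negMulLog, Real.log_mul (ne_of_gt hNpos) (ne_of_gt h)]
      field_simp
      linear_combination (-(p j * Real.log N) - p j * Real.log (p j)) * mul_inv_cancel₀ (ne_of_gt hNpos)
  rw [Finset.sum_congr rfl (fun j _ => expand j)] at jensen
  rw [Finset.sum_sub_distrib] at jensen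
  have : ∑ x : Fin N, -(p x * Real.log N) = -Real.log N := by
    rw [Finset.sum_neg_distrib, ← Finset.sum_mul, h1]; ring
  rw [this] at jensen
  linarith

lemma permMat_eq {N : ℕ} (σ : Equiv.Perm (Fin N)) :
    permMat σ = σ.permMatrix ℝ := by
  ext i j
  simp [permMat, Equiv.Perm.permMatrix, PEquiv.toMatrix_apply, Equiv.toPEquiv_apply]

lemma permMat_doublyStochastic {N : ℕ} (σ : Equiv.Perm (Fin N)) :
    IsDoublyStochastic (permMat σ) := by
  refine ⟨fun i j => by simp [permMat]; split <;> norm_num, fun i => ?_, fun j => ?_⟩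
  · simp [permMat]
  · simp only [permMat, Matrix.of_apply]
    rw [Fintype.sum_equiv σ _ (fun x => if x = j then (1:ℝ) else 0)
      (fun x => rfl)]
    simp
  -- note: sum over i of (if σ i = j then 1 else 0) = 1 since σ is a bijection

lemma entH_permMat {N : ℕ} (σ : Equiv.Perm (Fin N)) : entH (permMat σ) = 0 := by
  unfold entH permMat
  simp only [Matrix.of_apply]
  rw [neg_eq_zero]
  apply Finset.sum_eq_zero
  intro i _
  apply Finset.sum_eq_zero
  intro j _
  split <;> simp

lemma frob_sum_smul {N : ℕ} (C : Matrix (Fin N) (Fin N) ℝ)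
    (w : Equiv.Perm (Fin N) → ℝ) :
    frob C (∑ σ, w σ • σ.permMatrix ℝ) = ∑ σ, w σ * frob C (σ.permMatrix ℝ) := by
  unfold frob
  simp only [Matrix.sum_apply, Matrix.smul_apply, smul_eq_mul, Finset.mul_sum]
  calc ∑ i, ∑ j, ∑ σ, C i j * (w σ * σ.permMatrix ℝ i j)
      = ∑ i, ∑ σ, ∑ j, C i j * (w σ * σ.permMatrix ℝ i j) :=
        Finset.sum_congr rfl (fun i _ => Finset.sum_comm)
    _ = ∑ σ, ∑ i, ∑ j, C i j * (w σ * σ.permMatrix ℝ i j) := Finset.sum_comm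
    _ = ∑ σ, ∑ i, ∑ j, w σ * (C i j * σ.permMatrix ℝ i j) := by
        apply Finset.sum_congr rfl; intro σ _
        apply Finset.sum_congr rfl; intro i _
        apply Finset.sum_congr rfl; intro j _
        ring

/-- If `m β` is the minimum of the entropy-regularized objective `S_{β,C}` over
doubly stochastic matrices and `m*` is the minimum of `⟨C, P⟩_F` over permutation
matrices, then `0 ≤ m* - m β ≤ N log N / β`; in particular `m β → m*` as `β → ∞`. -/
theorem sobj_min_tendsto_pit_min (N : ℕ) (hN : 1 ≤ N)
    (C : Matrix (Fin N) (Fin N) ℝ) (m : ℝ → ℝ) (mstar : ℝ)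
    (hm : ∀ β : ℝ, 0 < β →
      IsLeast {x : ℝ | ∃ B : Matrix (Fin N) (Fin N) ℝ,
        IsDoublyStochastic B ∧ x = Sobj β C B} (m β))
    (hstar : IsLeast {x : ℝ | ∃ P : Matrix (Fin N) (Fin N) ℝ,
      IsPermMatrix P ∧ x = frob C P} mstar) :
    (∀ β : ℝ, 0 < β →
      0 ≤ mstar - m β ∧ mstar - m β ≤ N * Real.log N / β) ∧
    Tendsto m atTop (𝓝 mstar) := by
  have hNpos : (0:ℝ) < N := by exact_mod_cast hN
  have hlogN : 0 ≤ (N:ℝ) * Real.log N := by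
    apply mul_nonneg (le_of_lt hNpos)
    apply Real.log_nonneg; exact_mod_cast hN
  -- mstar ≤ frob C B for doubly stochastic B (Birkhoff)
  have hBirk : ∀ B : Matrix (Fin N) (Fin N) ℝ, IsDoublyStochastic B →
      mstar ≤ frob C B := by
    intro B hB
    have hB' : B ∈ doublyStochastic ℝ (Fin N) := by
      rw [mem_doublyStochastic_iff_sum]; exact hB
    obtain ⟨w, hw0, hw1, hwB⟩ := exists_eq_sum_perm_of_mem_doublyStochastic hB'
    rw [← hwB, frob_sum_smul]
    calc mstar = ∑ σ : Equiv.Perm (Fin N), w σ * mstar := by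
            rw [← Finset.sum_mul, hw1, one_mul]
      _ ≤ ∑ σ : Equiv.Perm (Fin N), w σ * frob C (σ.permMatrix ℝ) := by
            apply Finset.sum_le_sum
            intro σ _
            apply mul_le_mul_of_nonneg_left _ (hw0 σ)
            exact hstar.2 ⟨σ.permMatrix ℝ, ⟨σ, (permMat_eq σ).symm⟩, rfl⟩
  -- entropy bound
  have hEnt : ∀ B : Matrix (Fin N) (Fin N) ℝ, IsDoublyStochastic B →
      entH B ≤ N * Real.log N := by
    intro B hB
    unfold entH
    rw [← Finset.sum_neg_distrib]
    calc ∑ i, -∑ j, B i j * Real.log (B i j)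
        ≤ ∑ _i : Fin N, Real.log N := by
          apply Finset.sum_le_sum
          intro i _
          exact row_ent N hN (B i) (hB.1 i) (hB.2.1 i)
      _ = N * Real.log N := by simp [Finset.sum_const, mul_comm]
  -- key bounds
  have key : ∀ β : ℝ, 0 < β → 0 ≤ mstar - m β ∧ mstar - m β ≤ N * Real.log N / β := by
    intro β hβ
    obtain ⟨⟨B, hBds, hBeq⟩, hlb⟩ := hm β hβ
    obtain ⟨⟨P, ⟨σ, rfl⟩, hPeq⟩, hplb⟩ := hstar
    constructor
    · have h1 : m β ≤ Sobj β C (permMat σ) :=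
        hlb ⟨permMat σ, permMat_doublyStochastic σ, rfl⟩
      have h2 : Sobj β C (permMat σ) = mstar := by
        rw [Sobj, entH_permMat, hPeq]; ring
      linarith
    · have h1 : mstar ≤ frob C B := hBirk B hBds
      have h2 : entH B ≤ N * Real.log N := hEnt B hBds
      rw [hBeq, Sobj]
      have h3 : (1/β) * entH B ≤ (1/β) * ((N:ℝ) * Real.log N) := by
        apply mul_le_mul_of_nonneg_left h2
        positivity
      have h4 : (1/β) * ((N:ℝ) * Real.log N) = (N:ℝ) * Real.log N / β := by
        field_simp
      linarith
  refine ⟨key, ?_⟩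
  have hconst : Tendsto (fun _ : ℝ => mstar) atTop (𝓝 mstar) := tendsto_const_nhds
  have hlow : Tendsto (fun β : ℝ => mstar - (N:ℝ) * Real.log N / β) atTop (𝓝 mstar) := by
    have : Tendsto (fun β : ℝ => (N:ℝ) * Real.log N / β) atTop (𝓝 0) :=
      tendsto_const_nhds.div_atTop tendsto_id
    simpa using hconst.sub this
  apply tendsto_of_tendsto_of_tendsto_of_le_of_le' hlow hconst
  · filter_upwards [eventually_gt_atTop (0:ℝ)] with β hβ
    linarith [(key β hβ).2]
  · filter_upwards [eventually_gt_atTop (0:ℝ)] with β hβ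
    linarith [(key β hβ).1]
end
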